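/- arXiv:1809.08253 — 6 statements merged into one kernel-verified Lean document; each statement's English description precedes it below -/
import Mathlib

section
/- If G is a subgroup of the group of germs of holomorphic diffeomorphisms of (ℂ,0) generated by f₁,…,f_{ν+1} with f₁∘⋯∘f_{ν+1} = id and all fᵢ pairwise conjugate in G, and G is abelian, then G is a finite cyclic group generated by f₁, and f₁^{ν+1} = id. -/
open Filter Topology

namespace Paper

variable (𝕜 : Type) [NontriviallyNormedField 𝕜]

/-- Representatives of germs at `0` of analytic maps fixing `0`. -/
def A : Type := {f : 𝕜 → 𝕜 // AnalyticAt 𝕜 f 0 ∧ f 0 = 0}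

instance germSetoid : Setoid (A 𝕜) where
  r f g := f.1 =ᶠ[nhds (0 : 𝕜)] g.1
  iseqv := ⟨fun _ => Filter.EventuallyEq.rfl, Filter.EventuallyEq.symm,
    Filter.EventuallyEq.trans⟩

/-- Germs at `0` of analytic maps fixing `0`; a monoid under composition. -/
def M : Type := Quotient (germSetoid 𝕜)

variable {𝕜}

/-- Composition of representatives. -/
def compA (f g : A 𝕜) : A 𝕜 :=
  ⟨f.1 ∘ g.1, by
    constructor
    · exact AnalyticAt.comp (by rw [g.2.2]; exact f.2.1) g.2.1
    · simp [Function.comp_apply, g.2.2, f.2.2]⟩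

theorem compA_wd (f₁ f₂ g₁ g₂ : A 𝕜) (hf : f₁ ≈ f₂) (hg : g₁ ≈ g₂) :
    compA f₁ g₁ ≈ compA f₂ g₂ := by
  have hg0 : Filter.Tendsto g₁.1 (nhds 0) (nhds (0 : 𝕜)) := by
    have h := g₁.2.1.continuousAt
    rwa [ContinuousAt, g₁.2.2] at h
  exact (Filter.EventuallyEq.comp_tendsto hf hg0).trans (Filter.EventuallyEq.fun_comp hg f₂.1)

instance : Monoid (M 𝕜) where
  mul := Quotient.map₂ compA (fun _ _ hf _ _ hg => compA_wd _ _ _ _ hf hg)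
  one := Quotient.mk _ ⟨id, analyticAt_id, rfl⟩
  mul_assoc a b c := by
    induction a using Quotient.inductionOn with | _ f =>
    induction b using Quotient.inductionOn with | _ g =>
    induction c using Quotient.inductionOn with | _ h =>
    exact Quotient.sound (Filter.EventuallyEq.rfl)
  one_mul a := by
    induction a using Quotient.inductionOn with | _ f =>
    exact Quotient.sound (Filter.EventuallyEq.rfl)
  mul_one a := by
    induction a using Quotient.inductionOn with | _ f =>
    exact Quotient.sound (Filter.EventuallyEq.rfl)

/-- The group `Diff(𝕜,0)` of germs of analytic diffeomorphisms fixing `0`,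
realized as the units of the composition monoid of analytic germs fixing `0`. -/
abbrev Diff (𝕜 : Type) [NontriviallyNormedField 𝕜] : Type := (M 𝕜)ˣ

/-- The multiplier `f'(0)` of a germ. -/
noncomputable def multiplier : M 𝕜 → 𝕜 :=
  Quotient.lift (fun f => deriv f.1 0) (fun _ _ h => Filter.EventuallyEq.deriv_eq h)

theorem iteratedDeriv_wd (n : ℕ) (f g : 𝕜 → 𝕜) (h : f =ᶠ[nhds (0 : 𝕜)] g) :
    iteratedDeriv n f 0 = iteratedDeriv n g 0 := by
  induction n generalizing f g with
  | zero => simpa using h.eq_of_nhds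
  | succ n ih =>
      rw [iteratedDeriv_succ', iteratedDeriv_succ']
      exact ih _ _ h.deriv

/-- The `n`-th derivative at `0` of a germ. -/
noncomputable def dAt (n : ℕ) : M 𝕜 → 𝕜 :=
  Quotient.lift (fun f => iteratedDeriv n f.1 0) (fun _ _ h => iteratedDeriv_wd n _ _ h)

end Paper


open Paper


/-- If `G ⊆ Diff(ℂ,0)` is generated by `f₁,…,f_{ν+1}` with
`f₁∘⋯∘f_{ν+1} = id`, all `fᵢ` pairwise conjugate in `G`, and `G` abelian, then
`G` is the finite cyclic group generated by `f₁` and `f₁^{ν+1} = id`. -/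
theorem stmt0 (ν : ℕ) (f : Fin (ν + 1) → Diff ℂ) (G : Subgroup (Diff ℂ))
    (hG : G = Subgroup.closure (Set.range f))
    (hcomp : (List.ofFn f).prod = 1)
    (hconj : ∀ i j, ∃ g ∈ G, f i * g = g * f j)
    (habel : ∀ a ∈ G, ∀ b ∈ G, a * b = b * a) :
    G = Subgroup.zpowers (f 0) ∧ f 0 ^ (ν + 1) = 1 ∧ (G : Set (Diff ℂ)).Finite := by
  have hmem : ∀ i, f i ∈ G := fun i => hG ▸ Subgroup.subset_closure ⟨i, rfl⟩
  have heq : ∀ i, f i = f 0 := by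
    intro i
    obtain ⟨g, hgG, hg⟩ := hconj i 0
    have := habel (f i) (hmem i) g hgG
    rw [this] at hg
    exact mul_left_cancel hg
  have hprod : (List.ofFn f).prod = f 0 ^ (ν + 1) := by
    rw [List.prod_eq_pow_card _ (f 0) (by
      intro x hx
      obtain ⟨i, rfl⟩ := List.mem_ofFn.1 hx
      exact heq i)]
    simp
  have hpow : f 0 ^ (ν + 1) = 1 := hprod ▸ hcomp
  have hGz : G = Subgroup.zpowers (f 0) := by
    rw [hG]
    apply le_antisymm
    · rw [Subgroup.closure_le]
      rintro x ⟨i, rfl⟩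
      rw [heq i]
      exact Subgroup.mem_zpowers _
    · rw [Subgroup.zpowers_le]
      exact Subgroup.subset_closure ⟨0, rfl⟩
  refine ⟨hGz, hpow, ?_⟩
  rw [hGz]
  exact (isOfFinOrder_iff_pow_eq_one.2 ⟨ν + 1, by omega, hpow⟩).finite_zpowers
end

section
/- Let G ⊂ Diff(ℂ,0) be an irreducible group with basic generators f₁,…,f_{ν+1} (i.e. f₁∘⋯∘f_{ν+1} = id and the fᵢ are pairwise conjugate in G). If some basic generator is tangent to the identity (has multiplier 1), then every basic generator equals the identity, so G is the trivial group. -/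
open Filter Topology

open Paper


section Aux
open Paper FormalMultilinearSeries

/-- coeff of a formal composition, 1D. -/
theorem comp_coeff_formula (q p : FormalMultilinearSeries ℂ ℂ ℂ) (n : ℕ) :
    (q.comp p).coeff n = ∑ c : Composition n,
      (∏ i, p.coeff (c.blocksFun i)) * q.coeff c.length := by
  show (∑ c : Composition n, q.compAlongComposition p c) (fun _ => (1:ℂ)) = _
  rw [ContinuousMultilinearMap.sum_apply]
  refine Finset.sum_congr rfl fun c _ => ?_
  rw [FormalMultilinearSeries.compAlongComposition_apply]
  have h1 : p.applyComposition c (fun _ => (1:ℂ)) = fun i => p.coeff (c.blocksFun i) := by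
    funext i
    rfl
  rw [h1, FormalMultilinearSeries.apply_eq_prod_smul_coeff, smul_eq_mul]

theorem comp_coeff_two_terms (q p : FormalMultilinearSeries ℂ ℂ ℂ) (n : ℕ) (hn : 2 ≤ n)
    (hzero : ∀ c : Composition n,
      c ≠ Composition.single n (by omega) → c ≠ Composition.ones n →
      (∏ i, p.coeff (c.blocksFun i)) * q.coeff c.length = 0) :
    (q.comp p).coeff n = p.coeff n * q.coeff 1 + (p.coeff 1) ^ n * q.coeff n := by
  classical
  have hpos : 0 < n := by omega
  have hne : Composition.single n hpos ≠ Composition.ones n := by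
    intro h
    have := congrArg Composition.length h
    rw [Composition.single_length, Composition.ones_length] at this
    omega
  rw [comp_coeff_formula]
  rw [← Finset.sum_subset (Finset.subset_univ {Composition.single n hpos, Composition.ones n})
      (fun c _ hc => by
        simp only [Finset.mem_insert, Finset.mem_singleton, not_or] at hc
        exact hzero c hc.1 hc.2)]
  rw [Finset.sum_pair hne]
  congr 1
  · rw [Finset.prod_congr rfl (fun i _ => congrArg p.coeff (Composition.single_blocksFun hpos i))]
    rw [Finset.prod_const, Finset.card_fin]
    simp [Composition.single_length, Composition.single_blocksFun]
  · simp [Composition.ones_length, Composition.ones_blocksFun, Finset.prod_const]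


/-- derivatives-to-coefficients. -/
theorem coeff_eq_deriv {f : ℂ → ℂ} {p : FormalMultilinearSeries ℂ ℂ ℂ}
    (h : HasFPowerSeriesAt f p 0) (n : ℕ) :
    p.coeff n = iteratedDeriv n f 0 / (n.factorial : ℂ) := by
  obtain ⟨r, hr⟩ := h
  have h2 := hr.factorial_smul (1 : ℂ) n
  rw [iteratedDeriv_eq_iteratedFDeriv]
  rw [← h2, nsmul_eq_mul]
  rw [FormalMultilinearSeries.coeff]
  have : ((n.factorial : ℂ)) ≠ 0 := Nat.cast_ne_zero.mpr n.factorial_ne_zero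
  field_simp
  rfl

/-- Germ coefficients. -/
noncomputable def gc (n : ℕ) (x : M ℂ) : ℂ := dAt n x / (n.factorial : ℂ)

theorem exists_series (x : M ℂ) : ∃ (f : A ℂ) (p : FormalMultilinearSeries ℂ ℂ ℂ),
    x = ⟦f⟧ ∧ HasFPowerSeriesAt f.1 p 0 ∧ ∀ n, p.coeff n = gc n x := by
  obtain ⟨f, hf⟩ := Quotient.exists_rep x
  obtain ⟨p, hp⟩ := f.2.1
  refine ⟨f, p, hf.symm, hp, fun n => ?_⟩
  rw [coeff_eq_deriv hp n, gc, ← hf]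
  rfl


theorem mk_mul (f g : A ℂ) :
    @HMul.hMul (M ℂ) (M ℂ) (M ℂ) instHMul ⟦f⟧ ⟦g⟧ = (⟦compA f g⟧ : M ℂ) := rfl

theorem one_def : (1 : M ℂ) = (⟦⟨id, analyticAt_id, rfl⟩⟧ : M ℂ) := rfl

theorem multiplier_mk (f : A ℂ) : multiplier (⟦f⟧ : M ℂ) = deriv f.1 0 := rfl

theorem gc_mk (n : ℕ) (f : A ℂ) :
    gc n (⟦f⟧ : M ℂ) = iteratedDeriv n f.1 0 / (Nat.factorial n : ℂ) := rfl

theorem multiplier_one' : multiplier (1 : M ℂ) = 1 := by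
  show deriv (id : ℂ → ℂ) 0 = 1
  simp

theorem multiplier_mul (x y : M ℂ) : multiplier (x * y) = multiplier x * multiplier y := by
  obtain ⟨f, hf⟩ := Quotient.exists_rep x
  obtain ⟨g, hg⟩ := Quotient.exists_rep y
  subst hf hg
  rw [mk_mul, multiplier_mk, multiplier_mk, multiplier_mk]
  show deriv (f.1 ∘ g.1) 0 = _
  rw [deriv_comp 0 (by rw [g.2.2]; exact f.2.1.differentiableAt) g.2.1.differentiableAt, g.2.2]

theorem gc_zero (x : M ℂ) : gc 0 x = 0 := by
  obtain ⟨f, hf⟩ := Quotient.exists_rep x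
  subst hf
  rw [gc_mk]
  simp [f.2.2]

theorem gc_one_eq (x : M ℂ) : gc 1 x = multiplier x := by
  obtain ⟨f, hf⟩ := Quotient.exists_rep x
  subst hf
  rw [gc_mk, multiplier_mk]
  simp [iteratedDeriv_one]

theorem iteratedDeriv_id_eq_zero (n : ℕ) (hn : 2 ≤ n) :
    iteratedDeriv n (id : ℂ → ℂ) 0 = 0 := by
  obtain ⟨m, rfl⟩ : ∃ m, n = m + 2 := ⟨n - 2, by omega⟩
  rw [show m + 2 = (m + 1) + 1 from rfl, iteratedDeriv_succ']
  have h1 : deriv (id : ℂ → ℂ) = fun _ => (1 : ℂ) := by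
    funext z; simp
  rw [h1, iteratedDeriv_succ']
  have h2 : deriv (fun _ : ℂ => (1 : ℂ)) = fun _ => (0 : ℂ) := by
    funext z; simp
  rw [h2]
  induction m with
  | zero => simp
  | succ k ih => rw [iteratedDeriv_succ']; simpa using ih (by omega)

theorem gc_one' (n : ℕ) (hn : 2 ≤ n) : gc n (1 : M ℂ) = 0 := by
  show iteratedDeriv n (id : ℂ → ℂ) 0 / (n.factorial : ℂ) = 0
  rw [iteratedDeriv_id_eq_zero n hn, zero_div]

/-- Extensionality of germs from Taylor coefficients. -/
theorem germ_ext (x y : M ℂ) (h : ∀ n, gc n x = gc n y) : x = y := by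
  obtain ⟨f, p, rfl, hp, hpc⟩ := exists_series x
  obtain ⟨g, q, rfl, hq, hqc⟩ := exists_series y
  have hpq : p = q := by
    funext n
    rw [← p.mkPiRing_coeff_eq n, ← q.mkPiRing_coeff_eq n, hpc, hqc, h]
  subst hpq
  refine Quotient.sound ?_
  rw [hasFPowerSeriesAt_iff] at hp hq
  have : f.1 =ᶠ[nhds (0 : ℂ)] g.1 := by
    filter_upwards [hp, hq] with z h1 h2
    have := h1.unique h2
    simpa using this
  exact this

/-- Coefficient of a product of germs, when one factor has trivial jet below level `n`. -/
theorem gc_mul_eq (x y : M ℂ) (n : ℕ) (hn : 2 ≤ n)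
    (h : (∀ m, 2 ≤ m → m < n → gc m x = 0) ∨ (∀ m, 2 ≤ m → m < n → gc m y = 0)) :
    gc n (x * y) = gc n y * multiplier x + (multiplier y) ^ n * gc n x := by
  classical
  obtain ⟨f, p, hfx, hp, hpc⟩ := exists_series x
  obtain ⟨g, q, hgy, hq, hqc⟩ := exists_series y
  subst hfx; subst hgy
  rw [mk_mul, gc_mk]
  have hcomp : HasFPowerSeriesAt (f.1 ∘ g.1) (p.comp q) 0 := by
    have hp' : HasFPowerSeriesAt f.1 p (g.1 0) := by rw [g.2.2]; exact hp
    exact hp'.comp hq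
  have hc := coeff_eq_deriv hcomp n
  have heq : iteratedDeriv n (f.1 ∘ g.1) 0 / (n.factorial : ℂ) = (p.comp q).coeff n := by
    rw [hc]
  rw [show (compA f g).1 = f.1 ∘ g.1 from rfl, heq]
  have hzero : ∀ c : Composition n,
      c ≠ Composition.single n (by omega) → c ≠ Composition.ones n →
      (∏ i, q.coeff (c.blocksFun i)) * p.coeff c.length = 0 := by
    intro c hcs hco
    rcases h with h | h
    · -- outer x special: p.coeff of middle lengths vanish
      have hl1 : c.length ≠ 1 := fun hl => hcs ((Composition.eq_single_iff_length (by omega)).mpr hl)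
      have hln : c.length ≠ n := fun hl => hco (Composition.eq_ones_iff_length.mpr hl)
      have hle : c.length ≤ n := c.length_le
      have hlp : 0 < c.length := c.length_pos_of_pos (by omega)
      have : p.coeff c.length = 0 := by
        rw [hpc]; exact h c.length (by omega) (by omega)
      rw [this, mul_zero]
    · -- inner y special: some block has size in [2, n)
      obtain ⟨b, hb, hb1⟩ := Composition.ne_ones_iff.mp hco
      obtain ⟨i, hi⟩ := List.get_of_mem hb
      have hlt : ∀ j, c.blocksFun j < n := (Composition.ne_single_iff (by omega)).mp hcs
      have hzero : q.coeff (c.blocksFun i) = 0 := by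
        rw [hqc]
        refine h _ ?_ (hlt i)
        have : c.blocksFun i = b := hi
        omega
      rw [Finset.prod_eq_zero (Finset.mem_univ i) hzero, zero_mul]
  rw [comp_coeff_two_terms p q n hn hzero]
  simp only [hpc, hqc, gc_one_eq]
  exact congrArg₂ (fun a b => gc n ⟦g⟧ * a + b ^ n * gc n ⟦f⟧) (gc_one_eq _) (gc_one_eq _)

theorem list_special (n : ℕ) (hn : 2 ≤ n) (l : List (M ℂ))
    (h : ∀ x ∈ l, multiplier x = 1 ∧ ∀ m, 2 ≤ m → m < n → gc m x = 0) :
    multiplier l.prod = 1 ∧ gc n l.prod = (l.map (gc n)).sum := by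
  induction l with
  | nil =>
      simp only [List.prod_nil, List.map_nil, List.sum_nil]
      exact ⟨multiplier_one', gc_one' n hn⟩
  | cons a t ih =>
      have ha := h a List.mem_cons_self
      have ht := fun x hx => h x (List.mem_cons_of_mem a hx)
      obtain ⟨ih1, ih2⟩ := ih ht
      constructor
      · rw [List.prod_cons, multiplier_mul, ha.1, ih1, one_mul]
      · rw [List.prod_cons, gc_mul_eq a t.prod n hn (Or.inl ha.2), ha.1, ih1, ih2,
          List.map_cons, List.sum_cons]
        ring

end Aux

/-- An irreducible subgroup of `Diff(ℂ,0)` with a basic generator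
tangent to the identity is trivial: every basic generator is the identity. -/
theorem stmt2 (ν : ℕ) (f : Fin (ν + 1) → Diff ℂ) (G : Subgroup (Diff ℂ))
    (hG : G = Subgroup.closure (Set.range f))
    (hcomp : (List.ofFn f).prod = 1)
    (hconj : ∀ i j, ∃ g ∈ G, f i * g = g * f j)
    (htang : ∃ i, multiplier (f i).val = 1) :
    (∀ i, f i = 1) ∧ G = ⊥ := by
  classical
  have hunit : ∀ g : Diff ℂ, multiplier (g.val) ≠ 0 := by
    intro g
    have h1 : g.val * (g⁻¹).val = 1 := by
      rw [← Units.val_mul, mul_inv_cancel, Units.val_one]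
    have h2 := multiplier_mul g.val (g⁻¹).val
    rw [h1, multiplier_one'] at h2
    exact left_ne_zero_of_mul_eq_one h2.symm
  have hall1 : ∀ i, multiplier (f i).val = 1 := by
    obtain ⟨i₀, hi₀⟩ := htang
    intro i
    obtain ⟨g, hg, he⟩ := hconj i i₀
    have h2 := congrArg (fun u : Diff ℂ => multiplier u.val) he
    simp only [Units.val_mul] at h2
    rw [multiplier_mul, multiplier_mul, hi₀, mul_one] at h2
    have h3 : multiplier (f i).val * multiplier g.val = 1 * multiplier g.val := by
      rw [h2, one_mul]
    exact mul_right_cancel₀ (hunit g) h3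
  have hG1 : ∀ g ∈ G, multiplier (g : Diff ℂ).val = 1 := by
    intro g hg
    rw [hG] at hg
    refine Subgroup.closure_induction ?_ ?_ ?_ ?_ hg
    · rintro x ⟨i, rfl⟩; exact hall1 i
    · rw [Units.val_one]; exact multiplier_one'
    · intro x y _ _ h1 h2
      rw [Units.val_mul, multiplier_mul, h1, h2, one_mul]
    · intro x _ h1
      have h2 : x.val * (x⁻¹).val = 1 := by
        rw [← Units.val_mul, mul_inv_cancel, Units.val_one]
      have h3 := multiplier_mul x.val (x⁻¹).val
      rw [h2, multiplier_one', h1, one_mul] at h3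
      exact h3.symm
  have key : ∀ n, 2 ≤ n → ∀ i, gc n (f i).val = 0 := by
    intro n
    induction n using Nat.strong_induction_on with
    | _ n ih =>
    intro hn i
    have hmid : ∀ (j : Fin (ν + 1)), ∀ m, 2 ≤ m → m < n → gc m (f j).val = 0 :=
      fun j m h1 h2 => ih m h2 h1 j
    have hcc : ∀ j k, gc n (f j).val = gc n (f k).val := by
      intro j k
      obtain ⟨g, hg, he⟩ := hconj j k
      have hgv := congrArg (fun u : Diff ℂ => gc n u.val) he
      simp only [Units.val_mul] at hgv
      rw [gc_mul_eq _ _ n hn (Or.inl (hmid j)), gc_mul_eq _ _ n hn (Or.inr (hmid k)),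
        hall1 j, hall1 k, hG1 g hg] at hgv
      simp only [one_pow, one_mul, mul_one] at hgv
      linear_combination hgv
    have hprodv : ((List.ofFn f).map (fun u : Diff ℂ => u.val)).prod = (1 : M ℂ) := by
      have h4 := map_list_prod (Units.coeHom (M ℂ)) (List.ofFn f)
      rw [hcomp] at h4
      simpa [Function.comp_def] using h4.symm
    have hspec := list_special n hn ((List.ofFn f).map (fun u : Diff ℂ => u.val)) ?_
    · obtain ⟨-, hsum⟩ := hspec
      rw [hprodv, gc_one' n hn, List.map_map] at hsum
      have h5 : (List.ofFn f).map ((gc n) ∘ (fun u : Diff ℂ => u.val)) =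
          List.ofFn (fun j => gc n (f j).val) := by
        rw [List.map_ofFn]; rfl
      have h6 : List.ofFn (fun j : Fin (ν + 1) => gc n (f j).val) =
          List.ofFn (fun _ : Fin (ν + 1) => gc n (f i).val) := by
        congr 1; funext j; exact hcc j i
      rw [h5, h6, List.sum_ofFn, Finset.sum_const, Finset.card_univ, Fintype.card_fin] at hsum
      have h7 : ((ν + 1 : ℕ) : ℂ) ≠ 0 := Nat.cast_ne_zero.mpr (by omega)
      have h8 : ((ν + 1 : ℕ) : ℂ) * gc n (f i).val = 0 := by
        rw [nsmul_eq_mul] at hsum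
        exact_mod_cast hsum.symm
      exact (mul_eq_zero.mp h8).resolve_left h7
    · intro x hx
      rw [List.mem_map] at hx
      obtain ⟨u, hu, rfl⟩ := hx
      rw [List.mem_ofFn] at hu
      obtain ⟨j, rfl⟩ := hu
      exact ⟨hall1 j, hmid j⟩
  have hfid : ∀ i, f i = 1 := by
    intro i
    apply Units.ext
    show (f i).val = 1
    apply germ_ext
    intro n
    match n with
    | 0 => rw [gc_zero, gc_zero]
    | 1 => rw [gc_one_eq, gc_one_eq, hall1 i, multiplier_one']
    | (m + 2) => rw [key (m + 2) (by omega) i, gc_one' _ (by omega)]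
  refine ⟨hfid, ?_⟩
  apply le_antisymm
  · rw [hG]
    refine (Subgroup.closure_le ⊥).mpr ?_
    rintro x ⟨i, rfl⟩
    simp [hfid i]
  · exact bot_le
end

section
/- Let η be a primitive l-th root of unity with l > 1, let β₁,…,β_{r+1} ∈ ℂ, and let Γ ⊂ Aff(ℂ) be the group generated by hᵢ(z) = ηz + βᵢ, i = 1,…,r+1. Then the hᵢ are pairwise conjugate in Γ if and only if either l has at least two distinct prime divisors, or l = q^m for a prime q and m ≥ 1 and β₁ = β₂ = ⋯ = β_{r+1}. -/
open Filter Topology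

open Finset

/-- ℤ[η]-module generated by the differences βᵢ - β₀. -/
noncomputable def M0 (η : ℂ) (r : ℕ) (β : Fin (r+1) → ℂ) : AddSubgroup ℂ :=
  AddSubgroup.closure {x | ∃ (a : ℕ) (i : Fin (r+1)), x = η ^ a * (β i - β 0)}

lemma M0_smul {η : ℂ} {r : ℕ} {β : Fin (r+1) → ℂ} {c : ℂ}
    (hc : c ∈ Algebra.adjoin ℤ {η}) : ∀ x ∈ M0 η r β, c * x ∈ M0 η r β := by
  induction hc using Algebra.adjoin_induction with
  | mem y hy =>
    obtain rfl : η = y := (Set.mem_singleton_iff.mp hy).symm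
    intro x hx
    induction hx using AddSubgroup.closure_induction with
    | mem z hz =>
      rcases hz with ⟨a, i, rfl⟩
      exact AddSubgroup.subset_closure ⟨a+1, i, by ring⟩
    | zero => simpa using (M0 η r β).zero_mem
    | add u v hu hv hu' hv' => simpa [mul_add] using (M0 η r β).add_mem hu' hv'
    | neg u hu hu' => simpa [mul_neg] using (M0 η r β).neg_mem hu'
  | algebraMap n =>
    intro x hx
    have : (algebraMap ℤ ℂ n) * x = n • x := by
      simp [zsmul_eq_mul]
    rw [this]
    exact AddSubgroup.zsmul_mem _ hx n
  | add u v hu hv hu' hv' =>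
    intro x hx
    simpa [add_mul] using (M0 η r β).add_mem (hu' x hx) (hv' x hx)
  | mul u v hu hv hu' hv' =>
    intro x hx
    rw [mul_assoc]
    exact hu' _ (hv' x hx)

lemma sigma_add (η : ℂ) (k k' : ℕ) :
    ∑ t ∈ range (k + k'), η ^ t
      = (∑ t ∈ range k, η ^ t) + η ^ k * ∑ t ∈ range k', η ^ t := by
  rw [Finset.sum_range_add, Finset.mul_sum]
  simp [pow_add]

lemma sigma_l {l : ℕ} (hl : 1 < l) {η : ℂ} (hη : IsPrimitiveRoot η l) :
    ∑ t ∈ range l, η ^ t = 0 := by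
  have h1 : (∑ t ∈ range l, η ^ t) * (η - 1) = η ^ l - 1 := geom_sum_mul η l
  rw [hη.pow_eq_one, sub_self] at h1
  have h2 : η - 1 ≠ 0 := sub_ne_zero.mpr (hη.ne_one hl)
  exact (mul_eq_zero.mp h1).resolve_right h2

lemma sigma_mul_l {l : ℕ} (hl : 1 < l) {η : ℂ} (hη : IsPrimitiveRoot η l) (k : ℕ) :
    ∑ t ∈ range (k * l), η ^ t = 0 := by
  induction k with
  | zero => simp
  | succ n ih =>
    have : (n+1) * l = n * l + l := by ring
    rw [this, sigma_add, ih, sigma_l hl hη, zero_add, mul_zero]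

lemma pow_kl {l : ℕ} {η : ℂ} (hη : IsPrimitiveRoot η l) (k : ℕ) :
    η ^ (k * l) = 1 := by
  rw [mul_comm, pow_mul, hη.pow_eq_one, one_pow]

lemma k_add_kl {l k : ℕ} (hl : 1 < l) : k + k * (l - 1) = k * l := by
  have h1 : 1 + (l - 1) = l := by omega
  calc k + k * (l-1) = k * (1 + (l-1)) := by ring
  _ = k * l := by rw [h1]


lemma apply_inv_cancel (e : ℂ ≃ᵃ[ℂ] ℂ) (z : ℂ) : e (e⁻¹ z) = z := by
  have h : e * e⁻¹ = 1 := mul_inv_cancel e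
  calc e (e⁻¹ z) = (e * e⁻¹) z := rfl
  _ = z := by rw [h]; rfl

/-- Every element of Γ has the canonical form. -/
lemma gamma_form {l : ℕ} (hl : 1 < l) {η : ℂ} (hη : IsPrimitiveRoot η l)
    {r : ℕ} {β : Fin (r+1) → ℂ} {h : Fin (r+1) → ℂ ≃ᵃ[ℂ] ℂ}
    (hh : ∀ i, ∀ z : ℂ, h i z = η * z + β i)
    {g : ℂ ≃ᵃ[ℂ] ℂ} (hg : g ∈ Subgroup.closure (Set.range h)) :
    ∃ (k : ℕ) (m : ℂ), m ∈ M0 η r β ∧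
      ∀ z, g z = η ^ k * z + (∑ t ∈ Finset.range k, η ^ t) * β 0 + m := by
  induction hg using Subgroup.closure_induction with
  | mem x hx =>
    obtain ⟨i, rfl⟩ := hx
    refine ⟨1, β i - β 0, AddSubgroup.subset_closure ⟨0, i, by ring⟩, fun z => ?_⟩
    rw [hh i z]; simp; try ring
  | one => exact ⟨0, 0, (M0 η r β).zero_mem, fun z => by simpa using rfl⟩
  | mul x y hx hy ihx ihy =>
    obtain ⟨k1, m1, hm1, hfx⟩ := ihx
    obtain ⟨k2, m2, hm2, hfy⟩ := ihy
    refine ⟨k1 + k2, η ^ k1 * m2 + m1,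
      (M0 η r β).add_mem (M0_smul (pow_mem (Algebra.self_mem_adjoin_singleton ℤ η) k1) _ hm2) hm1,
      fun z => ?_⟩
    have hxy : (x * y) z = x (y z) := rfl
    rw [hxy, hfy z, hfx, sigma_add, pow_add]
    ring
  | inv x hx ihx =>
    obtain ⟨k, m, hm, hfx⟩ := ihx
    refine ⟨k * (l - 1), -(η ^ (k * (l-1)) * m),
      (M0 η r β).neg_mem (M0_smul (pow_mem (Algebra.self_mem_adjoin_singleton ℤ η) _) _ hm),
      fun z => ?_⟩
    apply x.injective
    rw [apply_inv_cancel, hfx]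
    have e1 : η ^ k * η ^ (k * (l-1)) = 1 := by
      rw [← pow_add, k_add_kl hl, pow_kl hη]
    have e2 : (∑ t ∈ Finset.range k, η ^ t)
        + η ^ k * ∑ t ∈ Finset.range (k * (l-1)), η ^ t = 0 := by
      rw [← sigma_add, k_add_kl hl, sigma_mul_l hl hη]
    linear_combination (m - z) * e1 - β 0 * e2

/-- Powers of h 0. -/
lemma h0_pow {η : ℂ}
    {r : ℕ} {β : Fin (r+1) → ℂ} {h : Fin (r+1) → ℂ ≃ᵃ[ℂ] ℂ}
    (hh : ∀ i, ∀ z : ℂ, h i z = η * z + β i) (k : ℕ) (z : ℂ) :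
    ((h 0) ^ k) z = η ^ k * z + (∑ t ∈ Finset.range k, η ^ t) * β 0 := by
  induction k generalizing z with
  | zero => simpa using rfl
  | succ n ih =>
    have h1 : ((h 0) ^ (n+1)) z = ((h 0) ^ n) (h 0 z) := by rw [pow_succ]; rfl
    rw [h1, hh 0 z, ih, Finset.sum_range_succ]
    ring

/-- every element of M0 is realized as a translation in Γ. -/
lemma trans_mem {l : ℕ} (hl : 1 < l) {η : ℂ} (hη : IsPrimitiveRoot η l)
    {r : ℕ} {β : Fin (r+1) → ℂ} {h : Fin (r+1) → ℂ ≃ᵃ[ℂ] ℂ}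
    (hh : ∀ i, ∀ z : ℂ, h i z = η * z + β i) :
    ∀ m ∈ M0 η r β, ∃ g ∈ Subgroup.closure (Set.range h), ∀ z, g z = z + m := by
  intro m hm
  induction hm using AddSubgroup.closure_induction with
  | mem x hx =>
    obtain ⟨a, i, rfl⟩ := hx
    refine ⟨(h 0) ^ a * ((h i) * (h 0) ^ (l-1)) * (h 0) ^ (a * (l-1)), ?_, fun z => ?_⟩
    · have h0m : h 0 ∈ Subgroup.closure (Set.range h) :=
        Subgroup.subset_closure ⟨0, rfl⟩
      have him : h i ∈ Subgroup.closure (Set.range h) :=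
        Subgroup.subset_closure ⟨i, rfl⟩
      exact mul_mem (mul_mem (pow_mem h0m a) (mul_mem him (pow_mem h0m (l-1)))) (pow_mem h0m _)
    · have happ : ((h 0) ^ a * ((h i) * (h 0) ^ (l-1)) * (h 0) ^ (a * (l-1))) z
          = ((h 0) ^ a) ((h i) (((h 0) ^ (l-1)) (((h 0) ^ (a * (l-1))) z))) := rfl
      rw [happ, h0_pow hh, h0_pow hh, hh i, h0_pow hh]
      have h4 : l - 1 + 1 = l := by omega
      have e1 : η ^ a * η ^ (a * (l-1)) = 1 := by
        rw [← pow_add, k_add_kl hl, pow_kl hη]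
      have e2 : (∑ t ∈ Finset.range a, η ^ t)
          + η ^ a * ∑ t ∈ Finset.range (a * (l-1)), η ^ t = 0 := by
        rw [← sigma_add, k_add_kl hl, sigma_mul_l hl hη]
      have e3 : η * (∑ t ∈ Finset.range (l-1), η ^ t) + 1 = 0 := by
        have h5 := sigma_l hl hη
        rw [← h4, Finset.sum_range_succ'] at h5
        have h6 : ∑ t ∈ Finset.range (l-1), η ^ (t+1)
            = η * ∑ t ∈ Finset.range (l-1), η ^ t := by
          rw [Finset.mul_sum]; exact Finset.sum_congr rfl fun t _ => by ring
        rw [h6] at h5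
        simpa using h5
      have e4 : η * η ^ (l-1) = 1 := by
        have : η * η ^ (l-1) = η ^ (l-1+1) := by ring
        rw [this, h4, hη.pow_eq_one]
      linear_combination z * e1
        + (η ^ a * η ^ (a*(l-1)) * z + η ^ a * (∑ t ∈ Finset.range (a*(l-1)), η ^ t) * β 0) * e4
        + β 0 * e2 + (η ^ a * β 0) * e3
  | zero => exact ⟨1, one_mem _, fun z => by simpa using rfl⟩
  | add x y hx hy ihx ihy =>
    obtain ⟨g1, hg1, hf1⟩ := ihx
    obtain ⟨g2, hg2, hf2⟩ := ihy
    refine ⟨g1 * g2, mul_mem hg1 hg2, fun z => ?_⟩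
    have h1 : (g1 * g2) z = g1 (g2 z) := rfl
    rw [h1, hf2, hf1]
    ring
  | neg x hx ihx =>
    obtain ⟨g, hg, hf⟩ := ihx
    refine ⟨g⁻¹, inv_mem hg, fun z => ?_⟩
    apply g.injective
    rw [apply_inv_cancel, hf]
    ring

/-- If p is a prime dividing l, then (η-1) divides p in ℤ[η]. -/
lemma eta_sub_one_dvd_prime {l : ℕ} (hl : 1 < l) {η : ℂ} (hη : IsPrimitiveRoot η l)
    {p : ℕ} (hp : p.Prime) (hpl : p ∣ l) :
    ∃ c ∈ Algebra.adjoin ℤ {η}, (η - 1) * c = (p : ℂ) := by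
  obtain ⟨d, hd⟩ := hpl
  have hξ : IsPrimitiveRoot (η ^ d) p := hη.pow (by omega) (by rw [hd]; ring)
  have hsum : ∑ t ∈ range p, (η ^ d) ^ t = 0 := sigma_l hp.one_lt hξ
  refine ⟨-∑ t ∈ range p, ∑ j ∈ range (d * t), η ^ j, ?_, ?_⟩
  · exact Subalgebra.neg_mem _ (sum_mem fun t _ => sum_mem fun j _ =>
      pow_mem (Algebra.self_mem_adjoin_singleton ℤ η) j)
  · rw [mul_neg, Finset.mul_sum]
    have h1 : ∀ t ∈ range p, (η - 1) * ∑ j ∈ range (d * t), η ^ j = η ^ (d * t) - 1 := by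
      intro t _
      rw [mul_comm]
      exact geom_sum_mul η (d * t)
    rw [Finset.sum_congr rfl h1, Finset.sum_sub_distrib]
    have h2 : ∑ t ∈ range p, η ^ (d * t) = 0 := by
      rw [← hsum]
      exact Finset.sum_congr rfl fun t _ => by rw [← pow_mul, mul_comm]
    rw [h2]
    simp

/-- If l = q^m then (η-1)^l is divisible by q in ℤ[η]. -/
lemma eta_sub_one_pow_dvd {q m : ℕ} (hq : q.Prime) (η : ℂ) :
    ∃ c ∈ Algebra.adjoin ℤ {η}, (η - 1) ^ (q ^ m) - (η ^ (q ^ m) - 1) = (q : ℂ) * c := by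
  haveI : Fact q.Prime := ⟨hq⟩
  set P : Polynomial ℤ := (Polynomial.X - 1) ^ (q ^ m) - (Polynomial.X ^ (q ^ m) - 1) with hP
  have hmap : P.map (Int.castRingHom (ZMod q)) = 0 := by
    have h1 : ((Polynomial.X - 1 : Polynomial (ZMod q))) ^ (q ^ m)
        = Polynomial.X ^ (q ^ m) - 1 ^ (q ^ m) := sub_pow_char_pow _ _ _
    simp only [hP, Polynomial.map_sub, Polynomial.map_pow, Polynomial.map_X,
      Polynomial.map_one, h1, one_pow]
    ring
  have hdvd : Polynomial.C (q : ℤ) ∣ P := by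
    rw [Polynomial.C_dvd_iff_dvd_coeff]
    intro n
    have h2 : ((P.coeff n : ℤ) : ZMod q) = 0 := by
      have := Polynomial.coeff_map (Int.castRingHom (ZMod q)) n (p := P)
      rw [hmap] at this
      simpa using this.symm
    exact_mod_cast (ZMod.intCast_zmod_eq_zero_iff_dvd _ q).mp h2
  obtain ⟨Q, hQ⟩ := hdvd
  refine ⟨Polynomial.aeval η Q, Polynomial.aeval_mem_adjoin_singleton ℤ η, ?_⟩
  have h3 := congrArg (Polynomial.aeval η) hQ
  simpa [hP] using h3

/-- M0 is contained in a finitely generated ℤ-submodule. -/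
lemma M0_le_span {l : ℕ} (hl : 0 < l) {η : ℂ} (hη : η ^ l = 1)
    {r : ℕ} {β : Fin (r+1) → ℂ} :
    ∀ x ∈ M0 η r β, x ∈ Submodule.span ℤ
      (Set.range fun p : Fin l × Fin (r+1) => η ^ (p.1 : ℕ) * (β p.2 - β 0)) := by
  intro x hx
  induction hx using AddSubgroup.closure_induction with
  | mem z hz =>
    obtain ⟨a, i, rfl⟩ := hz
    have h1 : η ^ a * (β i - β 0) = η ^ (a % l) * (β i - β 0) := by
      conv_lhs => rw [← Nat.div_add_mod a l]
      rw [pow_add, pow_mul, hη, one_pow, one_mul]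
    rw [h1]
    exact Submodule.subset_span ⟨(⟨a % l, Nat.mod_lt a hl⟩, i), rfl⟩
  | zero => exact Submodule.zero_mem _
  | add u v hu hv hu' hv' => exact Submodule.add_mem _ hu' hv'
  | neg u hu hu' => exact Submodule.neg_mem _ hu'

/-- An element of a f.g. ℤ-submodule of ℂ divisible by all powers of q is zero. -/
lemma divisible_eq_zero {q : ℕ} (hq : 1 < q) (G : Set ℂ) (hG : G.Finite) (x : ℂ)
    (hx : x ∈ Submodule.span ℤ G)
    (hdiv : ∀ s : ℕ, ∃ y ∈ Submodule.span ℤ G, x = (q : ℂ) ^ s * y) : x = 0 := by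
  haveI := Module.Finite.span_of_finite ℤ hG
  haveI : Module.Free ℤ ↥(Submodule.span ℤ G) := Module.free_of_finite_type_torsion_free'
  set b := Module.Free.chooseBasis ℤ ↥(Submodule.span ℤ G) with hb
  set x' : ↥(Submodule.span ℤ G) := ⟨x, hx⟩ with hx'
  suffices hx0 : x' = 0 by simpa [hx'] using congrArg Subtype.val hx0
  rw [← LinearEquiv.map_eq_zero_iff b.repr]
  ext idx
  by_contra hne
  obtain ⟨s, hs⟩ : ∃ s : ℕ, (b.repr x' idx).natAbs < q ^ s :=
    ⟨(b.repr x' idx).natAbs, Nat.lt_pow_self hq⟩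
  obtain ⟨y, hy, hxy⟩ := hdiv s
  have h1 : x' = ((q : ℤ) ^ s) • (⟨y, hy⟩ : ↥(Submodule.span ℤ G)) := by
    apply Subtype.ext
    show x = ((q : ℤ) ^ s) • y
    rw [zsmul_eq_mul, hxy]
    push_cast
    ring
  have h3 : b.repr x' idx = (q : ℤ) ^ s * b.repr ⟨y, hy⟩ idx := by
    rw [h1, map_smul]
    simp
  have h4 : (q : ℤ) ^ s ∣ b.repr x' idx := ⟨_, h3⟩
  have hne' : b.repr x' idx ≠ 0 := by simpa using hne
  have h5 : (q : ℤ) ^ s ≤ |b.repr x' idx| :=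
    Int.le_of_dvd (abs_pos.mpr hne') ((dvd_abs _ _).mpr h4)
  rw [Int.abs_eq_natAbs] at h5
  have h6 : q ^ s ≤ (b.repr x' idx).natAbs := by exact_mod_cast h5
  omega

/-- Let `η` be a primitive `l`-th root of unity, `l > 1`, and let
`Γ ⊆ Aff(ℂ)` be generated by `hᵢ(z) = ηz + βᵢ`, `i = 1,…,r+1`.  The `hᵢ` are
pairwise conjugate in `Γ` iff either `l` has two distinct prime divisors, or
`l = q^m` for a prime `q`, `m ≥ 1`, and all `βᵢ` are equal. -/
theorem stmt8 (l : ℕ) (hl : 1 < l) (η : ℂ) (hη : IsPrimitiveRoot η l)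
    (r : ℕ) (β : Fin (r + 1) → ℂ) (h : Fin (r + 1) → ℂ ≃ᵃ[ℂ] ℂ)
    (hh : ∀ i, ∀ z : ℂ, h i z = η * z + β i)
    (Γ : Subgroup (ℂ ≃ᵃ[ℂ] ℂ)) (hΓ : Γ = Subgroup.closure (Set.range h)) :
    (∀ i j, ∃ g ∈ Γ, ∀ z : ℂ, h i (g z) = g (h j z)) ↔
      ((∃ p q : ℕ, p.Prime ∧ q.Prime ∧ p ≠ q ∧ p ∣ l ∧ q ∣ l) ∨
        ((∃ q m : ℕ, q.Prime ∧ 1 ≤ m ∧ l = q ^ m) ∧ ∀ i j, β i = β j)) := by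
  subst hΓ
  constructor
  · intro hconj
    by_cases htwo : ∃ p q : ℕ, p.Prime ∧ q.Prime ∧ p ≠ q ∧ p ∣ l ∧ q ∣ l
    · exact Or.inl htwo
    right
    set q := l.minFac with hqdef
    have hq : q.Prime := Nat.minFac_prime (by omega)
    have huniq : ∀ {d : ℕ}, d.Prime → d ∣ l → d = q := by
      intro d hd hdl
      by_contra hne
      exact htwo ⟨d, q, hd, hq, hne, hdl, Nat.minFac_dvd l⟩
    have hpow : l = q ^ l.primeFactorsList.length :=
      Nat.eq_prime_pow_of_unique_prime_dvd (by omega) huniq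
    have hm1 : 1 ≤ l.primeFactorsList.length := by
      rcases Nat.eq_zero_or_pos l.primeFactorsList.length with h0 | h1
      · rw [h0, pow_zero] at hpow; omega
      · exact h1
    refine ⟨⟨q, _, hq, hm1, hpow⟩, ?_⟩
    -- Step 1: each difference lies in (η-1)·M0
    have hδ : ∀ i, ∃ y ∈ M0 η r β, β i - β 0 = (η - 1) * y := by
      intro i
      obtain ⟨g, hg, hgc⟩ := hconj i 0
      obtain ⟨k, m, hm, hf⟩ := gamma_form hl hη hh hg
      refine ⟨-m, (M0 η r β).neg_mem hm, ?_⟩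
      have e0 := hgc 0
      rw [hh i, hh 0] at e0
      simp only [hf] at e0
      have gs := geom_sum_mul η k
      linear_combination e0 - β 0 * gs
    -- Step 2: M0 ⊆ (η-1)·M0
    have hstep : ∀ x ∈ M0 η r β, ∃ y ∈ M0 η r β, x = (η - 1) * y := by
      intro x hx
      induction hx using AddSubgroup.closure_induction with
      | mem z hz =>
        obtain ⟨a, i, rfl⟩ := hz
        obtain ⟨y, hy, hxy⟩ := hδ i
        exact ⟨η ^ a * y,
          M0_smul (pow_mem (Algebra.self_mem_adjoin_singleton ℤ η) a) _ hy,
          by rw [hxy]; ring⟩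
      | zero => exact ⟨0, (M0 η r β).zero_mem, by ring⟩
      | add u v hu hv hu' hv' =>
        obtain ⟨y1, hy1, e1⟩ := hu'
        obtain ⟨y2, hy2, e2⟩ := hv'
        exact ⟨y1 + y2, (M0 η r β).add_mem hy1 hy2, by rw [e1, e2]; ring⟩
      | neg u hu hu' =>
        obtain ⟨y1, hy1, e1⟩ := hu'
        exact ⟨-y1, (M0 η r β).neg_mem hy1, by rw [e1]; ring⟩
    -- Step 3: iterate
    have hpown : ∀ n : ℕ, ∀ x ∈ M0 η r β, ∃ y ∈ M0 η r β, x = (η - 1) ^ n * y := by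
      intro n
      induction n with
      | zero => exact fun x hx => ⟨x, hx, by ring⟩
      | succ n ih =>
        intro x hx
        obtain ⟨y, hy, e1⟩ := ih x hx
        obtain ⟨y', hy', e2⟩ := hstep y hy
        exact ⟨y', hy', by rw [e1, e2]; ring⟩
    -- Step 4: q-divisibility
    obtain ⟨c, hcmem, hcc⟩ := eta_sub_one_pow_dvd (m := l.primeFactorsList.length) hq η
    rw [← hpow, hη.pow_eq_one] at hcc
    have hcc' : (η - 1) ^ l = (q : ℂ) * c := by linear_combination hcc
    have hqone : ∀ x ∈ M0 η r β, ∃ y ∈ M0 η r β, x = (q : ℂ) * y := by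
      intro x hx
      obtain ⟨y, hy, e1⟩ := hpown l x hx
      exact ⟨c * y, M0_smul hcmem _ hy, by rw [e1, hcc']; ring⟩
    have hqdiv : ∀ s : ℕ, ∀ x ∈ M0 η r β, ∃ y ∈ M0 η r β, x = (q : ℂ) ^ s * y := by
      intro s
      induction s with
      | zero => exact fun x hx => ⟨x, hx, by ring⟩
      | succ s ih =>
        intro x hx
        obtain ⟨y, hy, e1⟩ := ih x hx
        obtain ⟨y', hy', e2⟩ := hqone y hy
        exact ⟨y', hy', by rw [e1, e2]; ring⟩
    -- Step 5: conclude each difference is zero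
    have hzero : ∀ i, β i - β 0 = 0 := by
      intro i
      have hmem : β i - β 0 ∈ M0 η r β := AddSubgroup.subset_closure ⟨0, i, by ring⟩
      refine divisible_eq_zero hq.one_lt _ (Set.finite_range _) _
        (M0_le_span (by omega) hη.pow_eq_one _ hmem) ?_
      intro s
      obtain ⟨y, hy, e1⟩ := hqdiv s _ hmem
      exact ⟨y, M0_le_span (by omega) hη.pow_eq_one _ hy, e1⟩
    intro i j
    have := hzero i
    have := hzero j
    have h1 : β i = β 0 := by linear_combination hzero i
    have h2 : β j = β 0 := by linear_combination hzero j
    rw [h1, h2]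
  · rintro (⟨p, q, hp, hq, hne, hpl, hql⟩ | ⟨-, heq⟩)
    · -- two distinct primes: η - 1 is a unit in ℤ[η]
      obtain ⟨cp, hcpm, hcp⟩ := eta_sub_one_dvd_prime hl hη hp hpl
      obtain ⟨cq, hcqm, hcq⟩ := eta_sub_one_dvd_prime hl hη hq hql
      obtain ⟨u, v, huv⟩ := Nat.isCoprime_iff_coprime.mpr ((Nat.coprime_primes hp hq).mpr hne)
      have hcast : (u : ℂ) * p + (v : ℂ) * q = 1 := by
        have := congrArg (Int.cast : ℤ → ℂ) huv
        push_cast at this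
        linear_combination this
      set e : ℂ := (u : ℂ) * cp + (v : ℂ) * cq with hedef
      have hemem : e ∈ Algebra.adjoin ℤ {η} := by
        refine add_mem (mul_mem ?_ hcpm) (mul_mem ?_ hcqm)
        · simpa using Subalgebra.algebraMap_mem (Algebra.adjoin ℤ {η}) u
        · simpa using Subalgebra.algebraMap_mem (Algebra.adjoin ℤ {η}) v
      have he1 : (η - 1) * e = 1 := by
        rw [hedef]
        linear_combination (u : ℂ) * hcp + (v : ℂ) * hcq + hcast
      intro i j
      have hdm : β j - β i ∈ M0 η r β := by
        have h1 : β j - β 0 ∈ M0 η r β := AddSubgroup.subset_closure ⟨0, j, by ring⟩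
        have h2 : β i - β 0 ∈ M0 η r β := AddSubgroup.subset_closure ⟨0, i, by ring⟩
        have := (M0 η r β).sub_mem h1 h2
        simpa using this
      have hmmem : e * (β j - β i) ∈ M0 η r β := M0_smul hemem _ hdm
      obtain ⟨g, hg, hgt⟩ := trans_mem hl hη hh _ hmmem
      refine ⟨g, hg, fun z => ?_⟩
      rw [hgt, hh i, hh j, hgt]
      linear_combination (β j - β i) * he1
    · intro i j
      refine ⟨1, one_mem _, fun z => ?_⟩
      have h1 : ∀ w : ℂ, (1 : ℂ ≃ᵃ[ℂ] ℂ) w = w := fun _ => rfl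
      rw [h1, h1, hh i, hh j, heq i j]
end

section
/- Let Γ ⊂ Aff(ℂ) be generated by hᵢ(z) = ηz + βᵢ, i = 1,…,r+1, where η is a primitive root of unity of order p^s for a prime p and s ≥ 1. If the hᵢ are pairwise conjugate in Γ, then β₁ = β₂ = ⋯ = β_{r+1}. -/
open Filter Topology

private noncomputable def sg (η : ℂ) (m : ℕ) : ℂ := ∑ k ∈ Finset.range m, η ^ k

private lemma sg_add (η : ℂ) (m n : ℕ) : sg η (m + n) = sg η m + η ^ m * sg η n := by
  simp [sg, Finset.sum_range_add, pow_add, Finset.mul_sum]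

private lemma sg_mul_eta (η : ℂ) (m : ℕ) : sg η m * (η - 1) = η ^ m - 1 :=
  geom_sum_mul η m

private lemma sg_q (η : ℂ) (hη1 : η ≠ 1) (q : ℕ) (hq : η ^ q = 1) : sg η q = 0 := by
  have h := sg_mul_eta η q
  rw [hq, sub_self] at h
  rcases mul_eq_zero.mp h with h | h
  · exact h
  · exact absurd (sub_eq_zero.mp h) hη1

private lemma sg_mul_q (η : ℂ) (hη1 : η ≠ 1) (q : ℕ) (hq : η ^ q = 1) :
    ∀ m, sg η (m * q) = 0 := by
  intro m
  induction m with
  | zero => simp [sg]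
  | succ k ih => rw [Nat.succ_mul, sg_add, ih, sg_q η hη1 q hq, mul_zero, add_zero]

/-- If `Γ ⊆ Aff(ℂ)` is generated by `hᵢ(z) = ηz + βᵢ` with `η` a
primitive root of unity of order `p^s` (`p` prime, `s ≥ 1`) and the `hᵢ` are
pairwise conjugate in `Γ`, then all `βᵢ` are equal. -/
theorem stmt9 (p : ℕ) (hp : p.Prime) (s : ℕ) (hs : 1 ≤ s)
    (η : ℂ) (hη : IsPrimitiveRoot η (p ^ s))
    (r : ℕ) (β : Fin (r + 1) → ℂ) (h : Fin (r + 1) → ℂ ≃ᵃ[ℂ] ℂ)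
    (hh : ∀ i, ∀ z : ℂ, h i z = η * z + β i)
    (Γ : Subgroup (ℂ ≃ᵃ[ℂ] ℂ)) (hΓ : Γ = Subgroup.closure (Set.range h))
    (hconj : ∀ i j, ∃ g ∈ Γ, ∀ z : ℂ, h i (g z) = g (h j z)) :
    ∀ i j, β i = β j := by
  classical
  set q := p ^ s with hqdef
  have hq2 : 2 ≤ q := by
    have := hp.two_le
    calc 2 = 2 ^ 1 := by norm_num
    _ ≤ p ^ s := Nat.pow_le_pow_left this 1 |>.trans (Nat.pow_le_pow_right (by omega) hs)
  have hq0 : 0 < q := by omega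
  have hηq : η ^ q = 1 := hη.pow_eq_one
  have hη1 : η ≠ 1 := hη.ne_one hq2
  have hsub1 : η - 1 ≠ 0 := sub_ne_zero.mpr hη1
  -- the module Δ
  set Δ : Submodule ℤ ℂ := Submodule.span ℤ
    (Set.range fun t : Fin q × Fin (r + 1) × Fin (r + 1) =>
      η ^ (t.1 : ℕ) * (β t.2.1 - β t.2.2)) with hΔdef
  have hΔfg : Δ.FG := Submodule.fg_span (Set.finite_range _)
  have hgen : ∀ (k : ℕ) i j, η ^ k * (β i - β j) ∈ Δ := by
    intro k i j
    have hk : η ^ k = η ^ (k % q) := by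
      conv_lhs => rw [← Nat.mod_add_div k q, pow_add, pow_mul, hηq, one_pow, mul_one]
    rw [hk]
    exact Submodule.subset_span ⟨(⟨k % q, Nat.mod_lt _ hq0⟩, i, j), rfl⟩
  have hηΔ : ∀ x ∈ Δ, η * x ∈ Δ := by
    intro x hx
    induction hx using Submodule.span_induction with
    | mem y hy =>
      obtain ⟨⟨k, i, j⟩, rfl⟩ := hy
      have := hgen ((k : ℕ) + 1) i j
      rwa [pow_succ', mul_assoc] at this
    | zero => simpa using Δ.zero_mem
    | add a b _ _ ha hb => rw [mul_add]; exact Δ.add_mem ha hb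
    | smul a x _ hx => rw [mul_smul_comm]; exact Δ.smul_mem a hx
  have hηpowΔ : ∀ (k : ℕ) x, x ∈ Δ → η ^ k * x ∈ Δ := by
    intro k
    induction k with
    | zero => intro x hx; simpa using hx
    | succ n ih =>
      intro x hx
      have := hηΔ _ (ih x hx)
      rwa [← mul_assoc, ← pow_succ'] at this
  have hσβ : ∀ (m : ℕ) j, sg η m * (β j - β 0) ∈ Δ := by
    intro m j
    rw [sg, Finset.sum_mul]
    exact Submodule.sum_mem _ fun k _ => hgen k j 0
  -- the controlling subgroup
  set K : Subgroup (ℂ ≃ᵃ[ℂ] ℂ) :=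
    { carrier := {g | ∃ m : ℕ, ∃ δ ∈ Δ, ∀ z : ℂ, g z = η ^ m * z + (sg η m * β 0 + δ)}
      one_mem' := ⟨0, 0, Δ.zero_mem, fun z => by simp [sg]⟩
      mul_mem' := by
        rintro g g' ⟨m, δ, hδ, hg⟩ ⟨n, δ', hδ', hg'⟩
        refine ⟨m + n, η ^ m * δ' + δ, Δ.add_mem (hηpowΔ m _ hδ') hδ, fun z => ?_⟩
        have hmul : (g * g') z = g (g' z) := rfl
        rw [hmul, hg', hg, sg_add, pow_add]
        ring
      inv_mem' := by
        rintro g ⟨m, δ, hδ, hg⟩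
        refine ⟨m * (q - 1), -(η ^ (m * (q - 1)) * δ),
          Δ.neg_mem (hηpowΔ _ _ hδ), fun z => ?_⟩
        have hmq : m + m * (q - 1) = m * q := by
          have : q - 1 + 1 = q := by omega
          calc m + m * (q - 1) = m * (q - 1 + 1) := by ring
          _ = m * q := by rw [this]
        have h1 : η ^ m * η ^ (m * (q - 1)) = 1 := by
          rw [← pow_add, hmq, mul_comm m q, pow_mul, hηq, one_pow]
        have h3 : sg η m + η ^ m * sg η (m * (q - 1)) = 0 := by
          rw [← sg_add, hmq, sg_mul_q η hη1 q hηq]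
        have hgw : g (η ^ (m * (q - 1)) * z +
            (sg η (m * (q - 1)) * β 0 + -(η ^ (m * (q - 1)) * δ))) = z := by
          rw [hg]
          linear_combination (z - δ) * h1 + β 0 * h3
        conv_lhs => rw [← hgw]
        rw [AffineEquiv.inv_def]
        exact g.symm_apply_apply _ } with hKdef
  have hΓK : Γ ≤ K := by
    rw [hΓ]
    refine (Subgroup.closure_le K).mpr ?_
    rintro g ⟨i, rfl⟩
    refine ⟨1, β i - β 0, by simpa using hgen 0 i 0, fun z => ?_⟩
    rw [hh i z]
    simp [sg, Finset.sum_range_one]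
  -- the key conjugacy consequence
  have key : ∀ i j, ∃ w ∈ Δ, β i - β j = (η - 1) * w := by
    intro i j
    obtain ⟨g, hgΓ, hgc⟩ := hconj i j
    obtain ⟨m, δ, hδ, hg⟩ := hΓK hgΓ
    have h0 := hgc 0
    rw [hh i (g 0), hg 0, hh j 0, hg (η * 0 + β j)] at h0
    refine ⟨sg η m * (β j - β 0) - δ, Δ.sub_mem (hσβ m j) hδ, ?_⟩
    have gm := sg_mul_eta η m
    linear_combination h0 - β j * gm
  -- (η - 1)⁻¹ stabilizes Δ
  have huΔ : ∀ x ∈ Δ, (η - 1)⁻¹ * x ∈ Δ := by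
    intro x hx
    induction hx using Submodule.span_induction with
    | mem y hy =>
      obtain ⟨⟨k, i, j⟩, rfl⟩ := hy
      obtain ⟨w, hw, hwe⟩ := key i j
      have : (η - 1)⁻¹ * (η ^ (k : ℕ) * (β i - β j)) = η ^ (k : ℕ) * w := by
        rw [hwe]
        field_simp
      rw [this]
      exact hηpowΔ _ _ hw
    | zero => simpa using Δ.zero_mem
    | add a b _ _ ha hb => rw [mul_add]; exact Δ.add_mem ha hb
    | smul a x _ hx => rw [mul_smul_comm]; exact Δ.smul_mem a hx
  -- Δ must be trivial
  have hbot : Δ = ⊥ := by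
    by_contra hbot
    have hu : IsIntegral ℤ ((η - 1)⁻¹) :=
      isIntegral_of_smul_mem_submodule Δ hbot hΔfg _
        (fun n hn => by simpa [smul_eq_mul] using huΔ n hn)
    obtain ⟨f, hmonic, hf⟩ := hu
    have hf' : Polynomial.aeval ((η - 1)⁻¹) f = 0 := hf
    set u := (η - 1)⁻¹ with hudef
    set n := f.natDegree with hndef
    have hn1 : 1 ≤ n := by
      by_contra hc
      have hn0 : n = 0 := by omega
      have hf1 : f = 1 := hmonic.natDegree_eq_zero.mp hn0
      rw [hf1] at hf'
      simp at hf'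
    have hmu : (η - 1) * u = 1 := mul_inv_cancel₀ hsub1
    have h2 : ∀ k : ℕ, (η - 1) ^ k * u ^ k = 1 := fun k => by
      rw [← mul_pow, hmu, one_pow]
    have hcn : f.coeff n = 1 := hmonic.coeff_natDegree
    have hae := Polynomial.aeval_eq_sum_range (R := ℤ) (S := ℂ) (p := f) u
    rw [hf', ← hndef, Finset.sum_range_succ, hcn] at hae
    have h0 : u ^ n + ∑ i ∈ Finset.range n, (f.coeff i : ℂ) * u ^ i = 0 := by
      have h00 : (0:ℂ) = ∑ i ∈ Finset.range n, (f.coeff i : ℂ) * u ^ i + u ^ n := by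
        simpa [zsmul_eq_mul] using hae
      linear_combination -h00
    have h3 : ∀ i ∈ Finset.range n, (f.coeff i : ℂ) * (η - 1) ^ (n - i)
        = (η - 1) ^ n * ((f.coeff i : ℂ) * u ^ i) := by
      intro i hi
      have hsplit : (η - 1) ^ n = (η - 1) ^ (n - i) * (η - 1) ^ i := by
        rw [← pow_add]
        congr 1
        have := Finset.mem_range.mp hi
        omega
      calc (f.coeff i : ℂ) * (η - 1) ^ (n - i)
          = (f.coeff i : ℂ) * (η - 1) ^ (n - i) * ((η - 1) ^ i * u ^ i) := by
            rw [h2 i, mul_one]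
        _ = (η - 1) ^ n * ((f.coeff i : ℂ) * u ^ i) := by rw [hsplit]; ring
    have h4 : (1:ℂ) + ∑ i ∈ Finset.range n, (f.coeff i : ℂ) * (η - 1) ^ (n - i) = 0 := by
      rw [Finset.sum_congr rfl h3, ← Finset.mul_sum]
      linear_combination ((η - 1) ^ n) * h0 - h2 n
    set P : Polynomial ℤ := ∑ i ∈ Finset.range n,
      Polynomial.C (f.coeff i) * (Polynomial.X - 1) ^ (n - 1 - i) with hPdef
    set G : Polynomial ℤ := (Polynomial.X - 1) * P + 1 with hGdef
    have haevalP : Polynomial.aeval η P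
        = ∑ i ∈ Finset.range n, (f.coeff i : ℂ) * (η - 1) ^ (n - 1 - i) := by
      rw [hPdef]
      simp
    have hS : (η - 1) * ∑ i ∈ Finset.range n, (f.coeff i : ℂ) * (η - 1) ^ (n - 1 - i)
        = ∑ i ∈ Finset.range n, (f.coeff i : ℂ) * (η - 1) ^ (n - i) := by
      rw [Finset.mul_sum]
      refine Finset.sum_congr rfl fun i hi => ?_
      have hni : n - i = (n - 1 - i) + 1 := by
        have := Finset.mem_range.mp hi
        omega
      rw [hni, pow_succ]
      ring
    have haevalG : Polynomial.aeval η G = 0 := by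
      have hGa : Polynomial.aeval η G = (η - 1) * Polynomial.aeval η P + 1 := by
        rw [hGdef]
        simp
      rw [hGa, haevalP]
      linear_combination hS + h4
    have hηint : IsIntegral ℤ η := by
      refine ⟨Polynomial.X ^ q - 1, ?_, by simp [hηq]⟩
      simpa using Polynomial.monic_X_pow_sub_C (1:ℤ) (by omega : q ≠ 0)
    have hdvd : minpoly ℤ η ∣ G := minpoly.isIntegrallyClosed_dvd hηint haevalG
    rw [← Polynomial.cyclotomic_eq_minpoly hη hq0] at hdvd
    obtain ⟨H, hH⟩ := hdvd
    have he1 := congrArg (Polynomial.eval 1) hH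
    rw [Polynomial.eval_mul] at he1
    haveI : Fact p.Prime := ⟨hp⟩
    have hcycval : Polynomial.eval 1 (Polynomial.cyclotomic q ℤ) = p := by
      have hqq : q = p ^ ((s - 1) + 1) := by rw [hqdef]; congr 1; omega
      rw [hqq]
      exact Polynomial.eval_one_cyclotomic_prime_pow _
    have hGval : Polynomial.eval 1 G = 1 := by
      rw [hGdef]
      simp
    rw [hGval, hcycval] at he1
    have hpdvd : (p:ℤ) ∣ 1 := ⟨_, he1⟩
    have hple : (p:ℤ) ≤ 1 := Int.le_of_dvd one_pos hpdvd
    have hp2 : (2:ℤ) ≤ (p:ℤ) := by exact_mod_cast hp.two_le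
    omega
  -- conclude
  intro i j
  have := hgen 0 i j
  rw [hbot, Submodule.mem_bot] at this
  rw [pow_zero, one_mul] at this
  exact sub_eq_zero.mp this
end

section
/- Let G ⊂ Diff^ω(ℝ,0) be a group of germs of real analytic diffeomorphisms generated by f₁,…,f_{ν+1} with f₁∘⋯∘f_{ν+1} = id, the fᵢ pairwise conjugate in G, and some fⱼ having multiplier a root of unity of order p^s (p prime, s ∈ ℕ). Then G is finite of order at most 2; and if s = 0 (i.e., the multiplier is 1), then G is trivial. -/
open Filter Topology

open Paper

namespace Aux

open Asymptotics

local notation "𝕄" => Paper.M ℝ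

lemma mk_mul (x y : 𝕄) (a b : Paper.A ℝ)
    (hx : x = Quotient.mk (Paper.germSetoid ℝ) a) (hy : y = Quotient.mk (Paper.germSetoid ℝ) b) :
    x * y = Quotient.mk (Paper.germSetoid ℝ) (Paper.compA a b) := by
  subst hx hy; rfl

lemma one_def : (1 : 𝕄) = Quotient.mk (Paper.germSetoid ℝ) ⟨id, analyticAt_id, rfl⟩ := rfl

lemma multiplier_mk (g : Paper.A ℝ) :
    Paper.multiplier (Quotient.mk (Paper.germSetoid ℝ) g : 𝕄) = deriv g.1 0 := rfl

lemma multiplier_one : Paper.multiplier (1 : 𝕄) = 1 := by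
  rw [one_def]; show deriv (id : ℝ → ℝ) 0 = 1
  simp [deriv_id]

lemma multiplier_mul (a b : 𝕄) :
    Paper.multiplier (a * b) = Paper.multiplier a * Paper.multiplier b := by
  induction a using Quotient.inductionOn with | _ g =>
  induction b using Quotient.inductionOn with | _ h =>
  rw [mk_mul _ _ g h rfl rfl, multiplier_mk, multiplier_mk, multiplier_mk]
  show deriv (g.1 ∘ h.1) 0 = _
  rw [deriv_comp]
  · rw [h.2.2]
  · rw [h.2.2]; exact g.2.1.differentiableAt
  · exact h.2.1.differentiableAt

lemma multiplier_unit_mul_inv (u : (𝕄)ˣ) :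
    Paper.multiplier u.val * Paper.multiplier (u⁻¹).val = 1 := by
  rw [← multiplier_mul, Units.mul_inv, multiplier_one]

lemma multiplier_unit_ne (u : (𝕄)ˣ) : Paper.multiplier u.val ≠ 0 := by
  intro h
  have := multiplier_unit_mul_inv u
  rw [h, zero_mul] at this
  norm_num at this

/-- The germ `k` has the expansion `x + c x^(m+1) + o(x^(m+1))`. -/
def PP (m : ℕ) (c : ℝ) (k : 𝕄) : Prop :=
  ∃ g : Paper.A ℝ, Quotient.mk (Paper.germSetoid ℝ) g = k ∧
    (fun x => g.1 x - x - c * x ^ (m+1)) =o[𝓝 (0:ℝ)] fun x => x ^ (m+1)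

lemma PP.rep {m c k} (h : PP m c k) (g : Paper.A ℝ)
    (hg : Quotient.mk (Paper.germSetoid ℝ) g = k) :
    (fun x => g.1 x - x - c * x ^ (m+1)) =o[𝓝 (0:ℝ)] fun x => x ^ (m+1) := by
  obtain ⟨g', hg', h⟩ := h
  have hev : g'.1 =ᶠ[𝓝 (0:ℝ)] g.1 := Quotient.exact (hg'.trans hg.symm)
  have : (fun x => g.1 x - x - c * x ^ (m+1)) =ᶠ[𝓝 (0:ℝ)]
      (fun x => g'.1 x - x - c * x ^ (m+1)) := by
    filter_upwards [hev] with x hx; rw [hx]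
  exact this.trans_isLittleO h

lemma coeff_zero_of_littleO {m : ℕ} {C : ℝ}
    (h : (fun x : ℝ => C * x ^ (m+1)) =o[𝓝 (0:ℝ)] fun x => x ^ (m+1)) : C = 0 := by
  by_contra hC
  have h2 : ∀ᶠ x in 𝓝 (0:ℝ), ‖C * x ^ (m+1)‖ ≤ |C|/2 * ‖x ^ (m+1)‖ :=
    h.def (by positivity)
  have h3 : ∀ᶠ x in 𝓝[≠] (0:ℝ), ‖C * x ^ (m+1)‖ ≤ |C|/2 * ‖x ^ (m+1)‖ :=
    nhdsWithin_le_nhds h2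
  obtain ⟨x, hx1, hx2⟩ := (h3.and eventually_mem_nhdsWithin).exists
  have hxne : x ≠ 0 := hx2
  have hpos : (0:ℝ) < ‖x ^ (m+1)‖ := norm_pos_iff.mpr (pow_ne_zero _ hxne)
  rw [norm_mul] at hx1
  have : ‖C‖ ≤ |C|/2 := le_of_mul_le_mul_right (by linarith [hx1]) hpos
  rw [Real.norm_eq_abs] at this
  have : |C| ≤ 0 := by linarith
  exact hC (abs_eq_zero.mp (le_antisymm this (abs_nonneg _)))

lemma pow_littleO {m m' : ℕ} (h : m' < m) :
    (fun x : ℝ => x ^ (m+1)) =o[𝓝 (0:ℝ)] fun x => x ^ (m'+1) := by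
  have h1 : (fun x : ℝ => x ^ (m - m')) =o[𝓝 (0:ℝ)] (fun _ => (1:ℝ)) := by
    rw [Asymptotics.isLittleO_one_iff]
    simpa [Nat.sub_ne_zero_of_lt h] using
      (continuous_pow (m - m')).tendsto' (0:ℝ) 0 (by simp [Nat.sub_ne_zero_of_lt h])
  have h2 := h1.mul_isBigO (Asymptotics.isBigO_refl (fun x : ℝ => x ^ (m'+1)) (𝓝 (0:ℝ)))
  have heq : (fun x : ℝ => x ^ (m - m') * x ^ (m'+1)) = fun x : ℝ => x ^ (m+1) := by
    funext x; rw [← pow_add]; congr 1; omega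
  rw [heq] at h2
  simpa using h2

lemma PP.unique {m : ℕ} {c c' : ℝ} {k : 𝕄} (h : PP m c k) (h' : PP m c' k) : c = c' := by
  obtain ⟨g, hg, hgo⟩ := h
  have h'o := h'.rep g hg
  have hsub := hgo.sub h'o
  have heq : (fun x => (g.1 x - x - c * x^(m+1)) - (g.1 x - x - c' * x^(m+1)))
      = fun x : ℝ => (c' - c) * x^(m+1) := by funext x; ring
  rw [heq] at hsub
  have := coeff_zero_of_littleO hsub
  linarith

lemma pp_one (m : ℕ) : PP m 0 (1 : 𝕄) := by
  refine ⟨⟨id, analyticAt_id, rfl⟩, rfl, ?_⟩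
  have : (fun x : ℝ => id x - x - 0 * x^(m+1)) = fun _ => (0:ℝ) := by funext x; simp
  rw [this]
  exact Asymptotics.isLittleO_zero _ _

lemma PP.isBigO {m : ℕ} {c : ℝ} {k : 𝕄} (g : Paper.A ℝ)
    (hg : Quotient.mk (Paper.germSetoid ℝ) g = k) (h : PP m c k) :
    (fun x => g.1 x - x) =O[𝓝 (0:ℝ)] fun x => x ^ (m+1) := by
  have h1 := (h.rep g hg).isBigO
  have : (fun x => g.1 x - x) = (fun x => (g.1 x - x - c*x^(m+1)) + c * x^(m+1)) := by
    funext x; ring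
  rw [this]
  exact h1.add (Asymptotics.isBigO_const_mul_self c _ _)

lemma PP.mono {m m' : ℕ} {c : ℝ} {k : 𝕄} (h : PP m c k) (hm : m' < m) : PP m' 0 k := by
  obtain ⟨g, hg, -⟩ := id h
  refine ⟨g, hg, ?_⟩
  have h2 := (h.isBigO g hg).trans_isLittleO (pow_littleO hm)
  have : (fun x => g.1 x - x - 0 * x^(m'+1)) = fun x => g.1 x - x := by funext x; ring
  rw [this]
  exact h2

lemma pp_zero_tangent {k : 𝕄} (hk : Paper.multiplier k = 1) : PP 0 0 k := by
  induction k using Quotient.inductionOn with | _ g =>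
  refine ⟨g, rfl, ?_⟩
  rw [multiplier_mk] at hk
  have hd : HasDerivAt g.1 1 0 := by
    have := g.2.1.differentiableAt.hasDerivAt
    rwa [hk] at this
  have h2 := hasDerivAt_iff_isLittleO.mp hd
  have heq : (fun x => g.1 x - x - 0 * x^(0+1)) = fun x => g.1 x - g.1 0 - (x - 0) • (1:ℝ) := by
    funext x; rw [g.2.2]; simp only [smul_eq_mul, sub_zero, pow_one, mul_one]; ring
  have heq2 : (fun x : ℝ => x ^ (0+1)) = fun x : ℝ => x - 0 := by funext x; simp
  rw [heq, heq2]
  exact h2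

lemma exists_pp {k : 𝕄} (hk : Paper.multiplier k = 1) (hk1 : k ≠ 1) :
    ∃ m c, 1 ≤ m ∧ c ≠ 0 ∧ PP m c k := by
  induction k using Quotient.inductionOn with | _ g =>
  have hA : AnalyticAt ℝ (fun x => g.1 x - x) 0 := g.2.1.sub analyticAt_id
  have hne : ¬ (∀ᶠ x in 𝓝 (0:ℝ), g.1 x - x = 0) := by
    intro h
    refine hk1 (Quotient.sound ?_)
    show g.1 =ᶠ[𝓝 (0:ℝ)] id
    filter_upwards [h] with x hx
    have : g.1 x = x := by linarith [hx]
    simpa using this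
  have horder : analyticOrderAt (fun x => g.1 x - x) 0 ≠ ⊤ := fun h => hne (analyticOrderAt_eq_top.mp h)
  obtain ⟨n, hn⟩ := WithTop.ne_top_iff_exists.mp horder
  obtain ⟨q, hq, hq0, heq⟩ := (hA.analyticOrderAt_eq_natCast (n := n)).mp hn.symm
  -- the leading coefficient
  set c := q 0 with hc
  have hqc : ContinuousAt q 0 := hq.continuousAt
  have key : (fun x => g.1 x - x - c * x ^ n) =o[𝓝 (0:ℝ)] fun x => x ^ n := by
    have h1 : (fun x : ℝ => x ^ n * (q x - c)) =o[𝓝 (0:ℝ)] fun x => x ^ n := by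
      have h2 : (fun x : ℝ => q x - c) =o[𝓝 (0:ℝ)] (fun _ => (1:ℝ)) := by
        rw [Asymptotics.isLittleO_one_iff]
        have := hqc.tendsto
        rw [show 𝓝 (q 0) = 𝓝 (c) from rfl] at this
        simpa using this.sub_const c
      have h3 := (Asymptotics.isBigO_refl (fun x : ℝ => x ^ n) (𝓝 (0:ℝ))).mul_isLittleO h2
      simpa using h3
    have hev : (fun x => g.1 x - x - c * x ^ n) =ᶠ[𝓝 (0:ℝ)]
        (fun x : ℝ => x ^ n * (q x - c)) := by
      filter_upwards [heq] with x hx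
      simp only [sub_zero, smul_eq_mul] at hx
      rw [hx]; ring
    exact hev.trans_isLittleO h1
  -- n cannot be 0
  have hn0 : n ≠ 0 := by
    intro h0
    have := heq.self_of_nhds
    rw [h0] at this
    simp [g.2.2] at this
    exact hq0 this.symm
  -- n cannot be 1
  have hn1 : n ≠ 1 := by
    intro h1
    have hpp : PP 0 c (Quotient.mk (Paper.germSetoid ℝ) g) :=
      ⟨g, rfl, by rw [show 0 + 1 = n by omega]; exact key⟩
    have := hpp.unique (pp_zero_tangent hk)
    exact hq0 this
  exact ⟨n - 1, c, by omega, hq0, ⟨g, rfl, by rw [show n - 1 + 1 = n by omega]; exact key⟩⟩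

lemma repTendsto (g : Paper.A ℝ) : Filter.Tendsto g.1 (𝓝 (0:ℝ)) (𝓝 (0:ℝ)) := by
  have h := g.2.1.continuousAt
  rwa [ContinuousAt, g.2.2] at h

lemma PP.hasDerivAt_one {m : ℕ} {c : ℝ} {k : 𝕄} (h : PP m c k) (hm : 1 ≤ m)
    (g : Paper.A ℝ) (hg : Quotient.mk (Paper.germSetoid ℝ) g = k) : HasDerivAt g.1 1 0 := by
  have h1 : (fun x => g.1 x - x) =o[𝓝 (0:ℝ)] fun x : ℝ => x := by
    have h2 := (h.isBigO g hg).trans_isLittleO (pow_littleO (show 0 < m from hm))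
    have heq : (fun x : ℝ => x ^ (0+1)) = fun x : ℝ => x := by funext x; simp
    rwa [heq] at h2
  rw [hasDerivAt_iff_isLittleO]
  have heq1 : (fun x' : ℝ => g.1 x' - g.1 0 - (x' - 0) • (1:ℝ)) = fun x => g.1 x - x := by
    funext x; rw [g.2.2]; simp
  have heq2 : (fun x' : ℝ => x' - 0) = fun x : ℝ => x := by funext x; simp
  rw [heq1, heq2]
  exact h1

lemma rep_isBigO_id {m : ℕ} (hm : 1 ≤ m) {c : ℝ} {k : 𝕄} (h : PP m c k)
    (g : Paper.A ℝ) (hg : Quotient.mk (Paper.germSetoid ℝ) g = k) :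
    g.1 =O[𝓝 (0:ℝ)] fun x => x := by
  have h1 : (fun x => g.1 x - x) =O[𝓝 (0:ℝ)] fun x : ℝ => x := by
    have h2 := (h.isBigO g hg).trans_isLittleO (pow_littleO (show 0 < m from hm))
    have heq : (fun x : ℝ => x ^ (0+1)) = fun x : ℝ => x := by funext x; simp
    rw [heq] at h2
    exact h2.isBigO
  have : g.1 = fun x => (g.1 x - x) + x := by funext x; ring
  rw [this]
  exact h1.add (Asymptotics.isBigO_refl _ _)

lemma ratio_pow {g : ℝ → ℝ} {lam : ℝ} (hg0 : g 0 = 0) (hd : HasDerivAt g lam 0)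
    (hO : g =O[𝓝 (0:ℝ)] fun x => x) (j : ℕ) :
    (fun x => (g x)^j - lam^j * x^j) =o[𝓝 (0:ℝ)] fun x => x^j := by
  rcases Nat.eq_zero_or_pos j with hj | hj
  · subst hj
    have : (fun x : ℝ => (g x)^0 - lam^0 * x^0) = fun _ => (0:ℝ) := by funext x; simp
    rw [this]
    exact Asymptotics.isLittleO_zero _ _
  have hsub : (fun x => g x - lam * x) =o[𝓝 (0:ℝ)] fun x : ℝ => x := by
    have h1 := hasDerivAt_iff_isLittleO.mp hd
    have heq1 : (fun x' : ℝ => g x' - g 0 - (x' - 0) • lam) = fun x => g x - lam * x := by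
      funext x; rw [hg0]; simp [smul_eq_mul]; ring
    have heq2 : (fun x' : ℝ => x' - 0) = fun x : ℝ => x := by funext x; simp
    rwa [heq1, heq2] at h1
  have hsum : (fun x => ∑ i ∈ Finset.range j, (g x)^i * (lam*x)^(j-1-i)) =O[𝓝 (0:ℝ)]
      fun x => x^(j-1) := by
    apply Asymptotics.IsBigO.fun_sum
    intro i hi
    have hij : i + (j - 1 - i) = j - 1 := by
      have := Finset.mem_range.mp hi; omega
    have h1 : (fun x => (g x)^i) =O[𝓝 (0:ℝ)] fun x => x^i := hO.pow i
    have h2 : (fun x : ℝ => (lam*x)^(j-1-i)) =O[𝓝 (0:ℝ)] fun x => x^(j-1-i) := by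
      have : (fun x : ℝ => (lam*x)^(j-1-i)) = fun x => lam^(j-1-i) * x^(j-1-i) := by
        funext x; rw [mul_pow]
      rw [this]
      exact Asymptotics.isBigO_const_mul_self _ _ _
    have h3 := h1.mul h2
    have heq : (fun x : ℝ => x^i * x^(j-1-i)) = fun x : ℝ => x^(j-1) := by
      funext x; rw [← pow_add, hij]
    rwa [heq] at h3
  have hmul := hsum.mul_isLittleO hsub
  have heqL : (fun x => (g x)^j - lam^j * x^j) =
      fun x => (∑ i ∈ Finset.range j, (g x)^i * (lam*x)^(j-1-i)) * (g x - lam * x) := by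
    funext x
    rw [geom_sum₂_mul (g x) (lam * x) j, mul_pow]
  have heqR : (fun x : ℝ => x^(j-1) * x) = fun x : ℝ => x^j := by
    funext x; rw [← pow_succ]; congr 1; omega
  rw [heqL, ← heqR]
  exact hmul

lemma pp_add {m : ℕ} (hm : 1 ≤ m) {c₁ c₂ : ℝ} {k₁ k₂ : 𝕄}
    (h₁ : PP m c₁ k₁) (h₂ : PP m c₂ k₂) : PP m (c₁ + c₂) (k₁ * k₂) := by
  obtain ⟨f₁, hf₁, e₁⟩ := id h₁
  obtain ⟨f₂, hf₂, e₂⟩ := id h₂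
  refine ⟨Paper.compA f₁ f₂, by rw [← hf₁, ← hf₂]; exact (mk_mul _ _ f₁ f₂ rfl rfl).symm, ?_⟩
  have ht2 : Filter.Tendsto f₂.1 (𝓝 (0:ℝ)) (𝓝 (0:ℝ)) := repTendsto f₂
  have hO2 : f₂.1 =O[𝓝 (0:ℝ)] fun x => x := rep_isBigO_id hm h₂ f₂ hf₂
  have hA : (fun x => f₁.1 (f₂.1 x) - f₂.1 x - c₁ * (f₂.1 x)^(m+1)) =o[𝓝 (0:ℝ)]
      fun x => (f₂.1 x)^(m+1) := e₁.comp_tendsto ht2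
  have hA2 := hA.trans_isBigO (hO2.pow (m+1))
  have hB : (fun x => (f₂.1 x)^(m+1) - x^(m+1)) =o[𝓝 (0:ℝ)] fun x => x^(m+1) := by
    have h3 := ratio_pow f₂.2.2 (h₂.hasDerivAt_one hm f₂ hf₂) hO2 (m+1)
    have heq : (fun x => (f₂.1 x)^(m+1) - (1:ℝ)^(m+1) * x^(m+1)) =
        fun x => (f₂.1 x)^(m+1) - x^(m+1) := by funext x; rw [one_pow, one_mul]
    rwa [heq] at h3
  have hB2 : (fun x => c₁ * ((f₂.1 x)^(m+1) - x^(m+1))) =o[𝓝 (0:ℝ)] fun x => x^(m+1) :=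
    hB.const_mul_left c₁
  have heq : (fun x => (Paper.compA f₁ f₂).1 x - x - (c₁ + c₂) * x^(m+1)) =
      fun x => (f₁.1 (f₂.1 x) - f₂.1 x - c₁ * (f₂.1 x)^(m+1))
        + ((c₁ * ((f₂.1 x)^(m+1) - x^(m+1))) + (f₂.1 x - x - c₂ * x^(m+1))) := by
    funext x
    show f₁.1 (f₂.1 x) - x - _ = _
    ring
  rw [heq]
  exact hA2.add (hB2.add e₂)

lemma val_ne_one {u : (𝕄)ˣ} (hu : u ≠ 1) : u.val ≠ 1 :=
  fun h => hu (Units.ext h)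

lemma pp_inv {m : ℕ} (hm : 1 ≤ m) {c : ℝ} {u : (𝕄)ˣ} (hu : Paper.multiplier u.val = 1)
    (h : PP m c u.val) : PP m (-c) ((u⁻¹).val) := by
  have hprod : u.val * (u⁻¹).val = 1 := u.mul_inv
  have hui : Paper.multiplier (u⁻¹).val = 1 := by
    have h2 := multiplier_unit_mul_inv u
    rw [hu, one_mul] at h2
    exact h2
  by_cases h1 : u = 1
  · subst h1
    have hc : c = 0 := h.unique (by rw [Units.val_one] at h ⊢; exact pp_one m)
    rw [hc, neg_zero, inv_one, Units.val_one]
    exact pp_one m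
  · have hne : (u⁻¹).val ≠ 1 := val_ne_one (fun hh => h1 (by rwa [inv_eq_one] at hh))
    obtain ⟨m', c', hm', hc', h'⟩ := exists_pp hui hne
    rcases lt_trichotomy m' m with hlt | heqm | hgt
    · exfalso
      have hmono : PP m' 0 u.val := h.mono hlt
      have hsum := pp_add hm' hmono h'
      rw [hprod] at hsum
      have := hsum.unique (pp_one m')
      rw [zero_add] at this
      exact hc' this
    · subst heqm
      have hsum := pp_add hm h h'
      rw [hprod] at hsum
      have h0 := hsum.unique (pp_one m')
      have : c' = -c := by linarith
      rwa [this] at h'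
    · have hmono : PP m 0 (u⁻¹).val := h'.mono hgt
      have hsum := pp_add hm h hmono
      rw [hprod] at hsum
      have h0 := hsum.unique (pp_one m)
      have : -c = (0:ℝ) := by linarith
      rw [this]
      exact hmono

lemma pp_conj {m : ℕ} {c : ℝ} (u k : (𝕄)ˣ) (hm : 1 ≤ m)
    (hk : Paper.multiplier k.val = 1) (h : PP m c k.val) :
    PP m ((Paper.multiplier u.val)^m * c) ((u⁻¹ * k * u).val) := by
  set lam := Paper.multiplier u.val with hlam
  have hlam0 : lam ≠ 0 := multiplier_unit_ne u
  have huinv : Paper.multiplier (u⁻¹).val * lam = 1 := by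
    rw [mul_comm]; exact multiplier_unit_mul_inv u
  have hphimul : Paper.multiplier ((u⁻¹ * k * u).val) = 1 := by
    rw [Units.val_mul, Units.val_mul, multiplier_mul, multiplier_mul, hk, mul_one]
    exact huinv
  by_cases hphi1 : u⁻¹ * k * u = 1
  · have hk1 : k = 1 := by
      have h2 : u * (u⁻¹ * k * u) * u⁻¹ = k := by group
      rw [hphi1] at h2
      rw [← h2]; group
    subst hk1
    have hc : c = 0 := h.unique (by rw [Units.val_one] at h ⊢; exact pp_one m)
    rw [hc, mul_zero, hphi1, Units.val_one]
    exact pp_one m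
  · obtain ⟨m', c', hm'1, hc'0, hφ⟩ := exists_pp hphimul (val_ne_one hphi1)
    obtain ⟨φ₀, hφ₀, eφ⟩ := id hφ
    obtain ⟨κ₀, hκ₀, eκ⟩ := id h
    obtain ⟨a, ha⟩ := Quotient.exists_rep ((u.val) : 𝕄)
    -- germ identity : a ∘ φ₀ = κ₀ ∘ a
    have hval : u.val * (u⁻¹ * k * u).val = k.val * u.val := by
      rw [← Units.val_mul, ← Units.val_mul]
      congr 1
      group
    have hmkeq : (Quotient.mk (Paper.germSetoid ℝ) (Paper.compA a φ₀) : 𝕄)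
        = Quotient.mk (Paper.germSetoid ℝ) (Paper.compA κ₀ a) := by
      rw [← mk_mul _ _ a φ₀ rfl rfl, ← mk_mul _ _ κ₀ a rfl rfl, ha, hφ₀, hκ₀]
      exact hval
    have heva : (Paper.compA a φ₀).1 =ᶠ[𝓝 (0:ℝ)] (Paper.compA κ₀ a).1 :=
      Quotient.exact hmkeq
    -- derivative of a at 0 is lam
    have hda : deriv a.1 0 = lam := by rw [hlam, ← ha, multiplier_mk]
    have hada : HasDerivAt a.1 lam 0 := by
      have := a.2.1.differentiableAt.hasDerivAt
      rwa [hda] at this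
    have hOa : a.1 =O[𝓝 (0:ℝ)] fun x => x := by
      have h1 := hasDerivAt_iff_isLittleO.mp hada
      have heq1 : (fun x' : ℝ => a.1 x' - a.1 0 - (x' - 0) • lam) =
          fun x => a.1 x - lam * x := by
        funext x; rw [a.2.2]; simp [smul_eq_mul]; ring
      have heq2 : (fun x' : ℝ => x' - 0) = fun x : ℝ => x := by funext x; simp
      rw [heq1, heq2] at h1
      have h2 : a.1 = fun x => (a.1 x - lam * x) + lam * x := by funext x; ring
      rw [h2]
      exact h1.isBigO.add (Asymptotics.isBigO_const_mul_self lam _ _)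
    -- F2 : second expansion of ψ = κ₀ ∘ a - a
    have F2 : (fun x => κ₀.1 (a.1 x) - a.1 x - (c * lam^(m+1)) * x^(m+1)) =o[𝓝 (0:ℝ)]
        fun x => x^(m+1) := by
      have hA := (eκ.comp_tendsto (repTendsto a)).trans_isBigO (hOa.pow (m+1))
      have hB := (ratio_pow a.2.2 hada hOa (m+1)).const_mul_left c
      have heq : (fun x => κ₀.1 (a.1 x) - a.1 x - (c * lam^(m+1)) * x^(m+1)) =
          fun x => (κ₀.1 (a.1 x) - a.1 x - c * (a.1 x)^(m+1))
            + (c * ((a.1 x)^(m+1) - lam^(m+1) * x^(m+1))) := by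
        funext x; ring
      rw [heq]
      exact hA.add hB
    -- F1 : MVT estimate
    have F1 : (fun x => a.1 (φ₀.1 x) - a.1 x - lam * (φ₀.1 x - x)) =o[𝓝 (0:ℝ)]
        fun x => φ₀.1 x - x := by
      rw [Asymptotics.isLittleO_iff]
      intro ε hε
      -- a is differentiable near 0 and deriv is continuous at 0
      obtain ⟨r₁, hr₁0, hr₁⟩ := Metric.eventually_nhds_iff.mp a.2.1.eventually_analyticAt
      have hAO : AnalyticOnNhd ℝ a.1 (Metric.ball (0:ℝ) r₁) := fun y hy =>
        hr₁ (by simpa [Metric.mem_ball] using hy)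
      have hdc : ContinuousAt (deriv a.1) 0 :=
        ((hAO.deriv) 0 (Metric.mem_ball_self hr₁0)).continuousAt
      have hev1 : ∀ᶠ y in 𝓝 (0:ℝ), ‖deriv a.1 y - lam‖ ≤ ε := by
        have := hdc.tendsto
        rw [hda] at this
        have h2 : ∀ᶠ y in 𝓝 (0:ℝ), deriv a.1 y ∈ Metric.closedBall lam ε :=
          this (Metric.closedBall_mem_nhds lam hε)
        filter_upwards [h2] with y hy
        simpa [Metric.mem_closedBall, dist_eq_norm] using hy
      obtain ⟨r₂, hr₂0, hr₂⟩ := Metric.eventually_nhds_iff.mp hev1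
      set r := min r₁ r₂ with hrdef
      have hr0 : 0 < r := lt_min hr₁0 hr₂0
      have hball : ∀ y ∈ Metric.ball (0:ℝ) r,
          DifferentiableAt ℝ (fun z => a.1 z - lam * z) y ∧
            ‖deriv (fun z => a.1 z - lam * z) y‖ ≤ ε := by
        intro y hy
        have hy1 : y ∈ Metric.ball (0:ℝ) r₁ :=
          Metric.ball_subset_ball (min_le_left _ _) hy
        have hy2 : dist y (0:ℝ) < r₂ :=
          lt_of_lt_of_le (Metric.mem_ball.mp hy) (min_le_right _ _)
        have hdiff : DifferentiableAt ℝ a.1 y := (hAO y hy1).differentiableAt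
        have hder : HasDerivAt (fun z => a.1 z - lam * z) (deriv a.1 y - lam) y := by
          have h1 := hdiff.hasDerivAt
          have h2 : HasDerivAt (fun z : ℝ => lam * z) lam y := by
            simpa using (hasDerivAt_id y).const_mul lam
          exact h1.sub h2
        refine ⟨hder.differentiableAt, ?_⟩
        rw [hder.deriv]
        exact hr₂ hy2
      have hevx : ∀ᶠ x in 𝓝 (0:ℝ),
          x ∈ Metric.ball (0:ℝ) r ∧ φ₀.1 x ∈ Metric.ball (0:ℝ) r := by
        have h1 : ∀ᶠ x in 𝓝 (0:ℝ), x ∈ Metric.ball (0:ℝ) r :=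
          Metric.ball_mem_nhds 0 hr0
        have h2 := (repTendsto φ₀) (Metric.ball_mem_nhds (0:ℝ) hr0)
        exact h1.and h2
      filter_upwards [hevx] with x hx
      obtain ⟨hx1, hx2⟩ := hx
      have hmvt := (convex_ball (0:ℝ) r).norm_image_sub_le_of_norm_deriv_le
        (f := fun z => a.1 z - lam * z) (fun y hy => (hball y hy).1)
        (fun y hy => (hball y hy).2) hx1 hx2
      have harg : a.1 (φ₀.1 x) - a.1 x - lam * (φ₀.1 x - x)
          = (a.1 (φ₀.1 x) - lam * (φ₀.1 x)) - (a.1 x - lam * x) := by ring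
      rw [harg]
      exact hmvt
    -- φ₀ - id is O(x^(m'+1))
    have hφO : (fun x => φ₀.1 x - x) =O[𝓝 (0:ℝ)] fun x => x^(m'+1) := hφ.isBigO φ₀ hφ₀
    -- F1b : first expansion
    have F1b : (fun x => a.1 (φ₀.1 x) - a.1 x - (lam * c') * x^(m'+1)) =o[𝓝 (0:ℝ)]
        fun x => x^(m'+1) := by
      have h1 := F1.trans_isBigO hφO
      have h2 := eφ.const_mul_left lam
      have heq : (fun x => a.1 (φ₀.1 x) - a.1 x - (lam * c') * x^(m'+1)) =
          fun x => (a.1 (φ₀.1 x) - a.1 x - lam * (φ₀.1 x - x))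
            + lam * (φ₀.1 x - x - c' * x^(m'+1)) := by
        funext x; ring
      rw [heq]
      exact h1.add h2
    -- transfer F1b through the germ identity
    have G1 : (fun x => κ₀.1 (a.1 x) - a.1 x - (lam * c') * x^(m'+1)) =o[𝓝 (0:ℝ)]
        fun x => x^(m'+1) := by
      refine (Filter.EventuallyEq.symm ?_).trans_isLittleO F1b
      filter_upwards [heva] with x hx
      have : a.1 (φ₀.1 x) = κ₀.1 (a.1 x) := hx
      rw [this]
    -- compare the two expansions
    rcases lt_trichotomy m' m with hlt | heqm | hgt
    · exfalso
      have hψO : (fun x => κ₀.1 (a.1 x) - a.1 x) =O[𝓝 (0:ℝ)] fun x => x^(m+1) := by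
        have heq : (fun x => κ₀.1 (a.1 x) - a.1 x) =
            fun x => (κ₀.1 (a.1 x) - a.1 x - (c * lam^(m+1)) * x^(m+1))
              + (c * lam^(m+1)) * x^(m+1) := by funext x; ring
        rw [heq]
        exact F2.isBigO.add (Asymptotics.isBigO_const_mul_self _ _ _)
      have hψo := hψO.trans_isLittleO (pow_littleO hlt)
      have h3 := hψo.sub G1
      have heq : (fun x => (κ₀.1 (a.1 x) - a.1 x)
          - (κ₀.1 (a.1 x) - a.1 x - (lam * c') * x^(m'+1))) =
          fun x => (lam * c') * x^(m'+1) := by funext x; ring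
      rw [heq] at h3
      have h5 := coeff_zero_of_littleO h3
      exact hc'0 ((mul_eq_zero.mp h5).resolve_left hlam0)
    · subst heqm
      have h3 := G1.sub F2
      have heq : (fun x => (κ₀.1 (a.1 x) - a.1 x - (lam * c') * x^(m'+1))
          - (κ₀.1 (a.1 x) - a.1 x - (c * lam^(m'+1)) * x^(m'+1))) =
          fun x => ((c * lam^(m'+1)) - (lam * c')) * x^(m'+1) := by funext x; ring
      rw [heq] at h3
      have h4 := coeff_zero_of_littleO h3
      have hc'eq : c' = lam^m' * c := by
        have h5 : lam * c' = lam * (lam^m' * c) := by linear_combination -h4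
        exact mul_left_cancel₀ hlam0 h5
      rw [← hc'eq]
      exact hφ
    · have hψO : (fun x => κ₀.1 (a.1 x) - a.1 x) =O[𝓝 (0:ℝ)] fun x => x^(m'+1) := by
        have heq : (fun x => κ₀.1 (a.1 x) - a.1 x) =
            fun x => (κ₀.1 (a.1 x) - a.1 x - (lam * c') * x^(m'+1))
              + (lam * c') * x^(m'+1) := by funext x; ring
        rw [heq]
        exact G1.isBigO.add (Asymptotics.isBigO_const_mul_self _ _ _)
      have hψo := hψO.trans_isLittleO (pow_littleO hgt)
      have h3 := hψo.sub F2
      have heq : (fun x => (κ₀.1 (a.1 x) - a.1 x)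
          - (κ₀.1 (a.1 x) - a.1 x - (c * lam^(m+1)) * x^(m+1))) =
          fun x => (c * lam^(m+1)) * x^(m+1) := by funext x; ring
      rw [heq] at h3
      have h4 := coeff_zero_of_littleO h3
      have hc0 : c = 0 := by
        have hlp : lam^(m+1) ≠ 0 := pow_ne_zero _ hlam0
        rcases mul_eq_zero.mp h4 with h | h
        · exact h
        · exact absurd h hlp
      rw [hc0, mul_zero]
      exact hφ.mono hgt

def DD (m : ℕ) (k : 𝕄) : Prop := ∃ c, PP m c k

open Classical in
noncomputable def tauF (m : ℕ) (k : 𝕄) : ℝ :=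
  if h : ∃ c, PP m c k then h.choose else 0

lemma tauF_spec {m : ℕ} {k : 𝕄} (h : DD m k) : PP m (tauF m k) k := by
  unfold tauF
  split
  · next h' => exact h'.choose_spec
  · next h' => exact absurd h h'

lemma tauF_eq {m : ℕ} {c : ℝ} {k : 𝕄} (h : PP m c k) : tauF m k = c :=
  (tauF_spec ⟨c, h⟩).unique h

lemma dd_mul {m : ℕ} (hm : 1 ≤ m) {x y : (𝕄)ˣ} (hx : DD m x.val) (hy : DD m y.val) :
    DD m ((x*y).val) ∧ tauF m ((x*y).val) = tauF m x.val + tauF m y.val := by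
  have h := pp_add hm (tauF_spec hx) (tauF_spec hy)
  rw [← Units.val_mul] at h
  exact ⟨⟨_, h⟩, tauF_eq h⟩

lemma dd_inv {m : ℕ} (hm : 1 ≤ m) {x : (𝕄)ˣ} (hmu : Paper.multiplier x.val = 1)
    (hx : DD m x.val) :
    DD m ((x⁻¹).val) ∧ tauF m ((x⁻¹).val) = - tauF m x.val := by
  have h := pp_inv hm hmu (tauF_spec hx)
  exact ⟨⟨_, h⟩, tauF_eq h⟩

lemma dd_conj {m : ℕ} (hm : 1 ≤ m) (u : (𝕄)ˣ) {x : (𝕄)ˣ}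
    (hmu : Paper.multiplier x.val = 1) (hx : DD m x.val) :
    DD m ((u⁻¹ * x * u).val) ∧
      tauF m ((u⁻¹ * x * u).val) = (Paper.multiplier u.val)^m * tauF m x.val := by
  have h := pp_conj u x hm hmu (tauF_spec hx)
  exact ⟨⟨_, h⟩, tauF_eq h⟩

lemma dd_one (m : ℕ) : DD m ((1:(𝕄)ˣ).val) ∧ tauF m ((1:(𝕄)ˣ).val) = 0 := by
  rw [Units.val_one]
  exact ⟨⟨0, pp_one m⟩, tauF_eq (pp_one m)⟩

lemma span_trivial (S : Set ℝ) (hfin : S.Finite)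
    (hdiv : ∀ x ∈ S, ∃ y ∈ Submodule.span ℤ S, x = 2 * y) :
    ∀ x ∈ Submodule.span ℤ S, x = 0 := by
  classical
  set L := Submodule.span ℤ S with hL
  set two : ℝ →ₗ[ℤ] ℝ := (2:ℤ) • LinearMap.id with htwo
  have hle : L ≤ L.map two := by
    rw [hL]
    apply Submodule.span_le.mpr
    intro x hx
    obtain ⟨y, hy, hxy⟩ := hdiv x hx
    refine ⟨y, hy, ?_⟩
    simp only [htwo, LinearMap.smul_apply, LinearMap.id_coe, id_eq, zsmul_eq_mul,
      Int.cast_ofNat]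
    rw [hxy]
    norm_num
  have hfg : L.FG := Submodule.fg_span hfin
  have hmf : Module.Finite ℤ ↥L := Module.Finite.iff_fg.mpr hfg
  have hfree : Module.Free ℤ ↥L := Module.free_of_finite_type_torsion_free'
  by_contra hcon
  push_neg at hcon
  obtain ⟨x, hxL, hx0⟩ := hcon
  have : Nontrivial ↥L := ⟨⟨x, hxL⟩, 0, by simp [hx0]⟩
  have b := hfree.chooseBasis
  obtain ⟨i⟩ := b.index_nonempty
  obtain ⟨y, hy, hxy⟩ := hle (b i).2
  set Y : ↥L := ⟨y, hy⟩ with hY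
  have hbi : ((2:ℤ) • Y : ↥L) = b i := by
    apply Subtype.ext
    simpa [htwo] using hxy
  have h1 : b.repr (b i) i = 1 := by simp
  rw [← hbi] at h1
  rw [map_smul] at h1
  simp only [Finsupp.smul_apply, smul_eq_mul] at h1
  omega

end Aux

/-- A group of germs of real analytic diffeomorphisms of `(ℝ,0)`
generated by `f₁,…,f_{ν+1}` with `f₁∘⋯∘f_{ν+1} = id`, the `fᵢ` pairwise conjugate in
`G`, and some multiplier a root of unity of order `p^s` (`p` prime), is finite of
order at most `2`; if `s = 0` it is trivial. -/
theorem stmt11 (ν : ℕ) (f : Fin (ν + 1) → Diff ℝ) (G : Subgroup (Diff ℝ))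
    (hG : G = Subgroup.closure (Set.range f))
    (hcomp : (List.ofFn f).prod = 1)
    (hconj : ∀ i j, ∃ g ∈ G, f i * g = g * f j)
    (p : ℕ) (hp : p.Prime) (s : ℕ)
    (hmult : ∃ j, multiplier (f j).val ^ (p ^ s) = 1 ∧
      ∀ m : ℕ, 0 < m → m < p ^ s → multiplier (f j).val ^ m ≠ 1) :
    (G : Set (Diff ℝ)).Finite ∧ Nat.card G ≤ 2 ∧ (s = 0 → G = ⊥) := by
  classical
  obtain ⟨j₀, hpow, hmin⟩ := hmult
  set a := multiplier (f j₀).val with ha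
  -- all generators have multiplier a
  have hmuf : ∀ i, multiplier (f i).val = a := by
    intro i
    obtain ⟨g, hgG, hcij⟩ := hconj i j₀
    have h1 : multiplier ((f i * g).val) = multiplier ((g * f j₀).val) := by rw [hcij]
    rw [Units.val_mul, Units.val_mul, Aux.multiplier_mul, Aux.multiplier_mul,
      mul_comm (multiplier g.val) (multiplier (f j₀).val)] at h1
    exact mul_right_cancel₀ (Aux.multiplier_unit_ne g) h1
  have hps0 : p ^ s ≠ 0 := (pow_pos hp.pos s).ne'
  have habs : a = 1 ∨ a = -1 := by
    have h2 : |a| ^ (p ^ s) = 1 := by rw [← abs_pow, hpow, abs_one]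
    have h3 : |a| = 1 := by
      by_contra hne
      rcases lt_or_gt_of_ne hne with hlt | hgt
      · exact absurd h2 (pow_lt_one₀ (abs_nonneg a) hlt hps0).ne
      · exact absurd h2 (one_lt_pow₀ hgt hps0).ne'
    exact (abs_eq zero_le_one).mp h3
  rcases habs with ha1 | ham1
  -- ============================ CASE a = 1 ============================
  · have hmu1 : ∀ i, multiplier (f i).val = 1 := fun i => by rw [hmuf i, ha1]
    have hall : ∀ i, f i = 1 := by
      by_contra hcon
      push_neg at hcon
      obtain ⟨i₀, hi₀⟩ := hcon
      have hex : ∃ m, ∃ i c, c ≠ 0 ∧ Aux.PP m c (f i).val := by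
        obtain ⟨m, c, _, hc, hpp⟩ := Aux.exists_pp (hmu1 i₀) (Aux.val_ne_one hi₀)
        exact ⟨m, i₀, c, hc, hpp⟩
      set ℓ := Nat.find hex with hldef
      obtain ⟨iw, cw, hcw, hppw⟩ := Nat.find_spec hex
      rw [← hldef] at hppw
      have hmin' : ∀ m' < ℓ, ¬ ∃ i c, c ≠ 0 ∧ Aux.PP m' c (f i).val :=
        fun m' hm' => Nat.find_min hex hm'
      have hℓ1 : 1 ≤ ℓ := by
        by_contra h0
        have hl0 : ℓ = 0 := by omega
        rw [hl0] at hppw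
        exact hcw (hppw.unique (Aux.pp_zero_tangent (hmu1 iw)))
      have hD : ∀ i, Aux.DD ℓ (f i).val := by
        intro i
        by_cases h1 : f i = 1
        · rw [h1, Units.val_one]; exact ⟨0, Aux.pp_one ℓ⟩
        · obtain ⟨m, c, hm1, hc, hpp⟩ := Aux.exists_pp (hmu1 i) (Aux.val_ne_one h1)
          rcases lt_trichotomy m ℓ with hlt | heq | hgt
          · exact absurd ⟨i, c, hc, hpp⟩ (hmin' m hlt)
          · exact ⟨c, heq ▸ hpp⟩
          · exact ⟨0, hpp.mono hgt⟩
      set T : Subgroup (Diff ℝ) :=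
        { carrier := {g | multiplier g.val = 1 ∧ Aux.DD ℓ g.val}
          one_mem' := ⟨by rw [Units.val_one]; exact Aux.multiplier_one,
            by rw [Units.val_one]; exact ⟨0, Aux.pp_one ℓ⟩⟩
          mul_mem' := by
            rintro x y ⟨hx1, hx2⟩ ⟨hy1, hy2⟩
            refine ⟨?_, (Aux.dd_mul hℓ1 hx2 hy2).1⟩
            rw [Units.val_mul, Aux.multiplier_mul, hx1, hy1, one_mul]
          inv_mem' := by
            rintro x ⟨hx1, hx2⟩
            refine ⟨?_, (Aux.dd_inv hℓ1 hx1 hx2).1⟩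
            have h2 := Aux.multiplier_unit_mul_inv x
            rw [hx1, one_mul] at h2
            exact h2 } with hT
      have hGT : G ≤ T := by
        rw [hG]
        refine (Subgroup.closure_le T).mpr ?_
        rintro x ⟨i, rfl⟩
        exact ⟨hmu1 i, hD i⟩
      have htaueq : ∀ i j, Aux.tauF ℓ (f j).val = Aux.tauF ℓ (f i).val := by
        intro i j
        obtain ⟨g, hgG, hcij⟩ := hconj i j
        have hfj : g⁻¹ * f i * g = f j := by
          calc g⁻¹ * f i * g = g⁻¹ * (f i * g) := by group
          _ = g⁻¹ * (g * f j) := by rw [hcij]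
          _ = f j := by group
        have hgT := hGT hgG
        have hcj := Aux.dd_conj hℓ1 g (hmu1 i) (hD i)
        rw [hgT.1, one_pow, one_mul] at hcj
        rw [← hfj]
        exact hcj.2
      have hlist : ∀ L : List (Diff ℝ), (∀ x ∈ L, ∃ i, x = f i) →
          Aux.DD ℓ (L.prod).val ∧
            Aux.tauF ℓ (L.prod).val = L.length • Aux.tauF ℓ (f i₀).val := by
        intro L
        induction L with
        | nil =>
          intro _
          rw [List.prod_nil, List.length_nil, zero_smul]
          exact Aux.dd_one ℓ
        | cons x L ih =>
          intro hmem
          obtain ⟨i, hxi⟩ := hmem x (by simp)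
          have hih := ih (fun y hy => hmem y (by simp [hy]))
          rw [List.prod_cons]
          have hDx : Aux.DD ℓ x.val := by rw [hxi]; exact hD i
          have h2 := Aux.dd_mul hℓ1 hDx hih.1
          refine ⟨h2.1, ?_⟩
          rw [h2.2, hih.2]
          have : Aux.tauF ℓ x.val = Aux.tauF ℓ (f i₀).val := by
            rw [hxi]; exact htaueq i₀ i
          rw [this, List.length_cons, succ_nsmul]
          ring
      have hfinal := hlist (List.ofFn f) (fun x hx => by
        obtain ⟨i, hi⟩ := List.mem_ofFn.mp hx
        exact ⟨i, hi.symm⟩)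
      rw [hcomp, List.length_ofFn] at hfinal
      have h0 : Aux.tauF ℓ ((1 : Diff ℝ)).val = 0 := (Aux.dd_one ℓ).2
      rw [h0] at hfinal
      have h3 : ((ν+1 : ℕ) : ℝ) * Aux.tauF ℓ (f i₀).val = 0 := by
        rw [← nsmul_eq_mul]
        exact hfinal.2.symm
      have ht0 : Aux.tauF ℓ (f i₀).val = 0 :=
        (mul_eq_zero.mp h3).resolve_left (Nat.cast_ne_zero.mpr (by omega))
      have : Aux.tauF ℓ (f iw).val = cw := Aux.tauF_eq hppw
      rw [htaueq i₀ iw, ht0] at this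
      exact hcw this.symm
    have hGbot : G = ⊥ := by
      rw [hG]
      refine le_antisymm ((Subgroup.closure_le ⊥).mpr ?_) bot_le
      rintro x ⟨i, rfl⟩
      rw [hall i]
      exact one_mem (⊥ : Subgroup (Diff ℝ))
    refine ⟨?_, ?_, fun _ => hGbot⟩
    · rw [hGbot, Subgroup.coe_bot]
      exact Set.finite_singleton 1
    · rw [hGbot, Subgroup.card_bot]
      omega
  -- ============================ CASE a = -1 ============================
  · have hmum1 : ∀ i, multiplier (f i).val = -1 := fun i => by rw [hmuf i, ham1]
    have hs0F : s = 0 → False := by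
      intro h0
      rw [h0, pow_zero, pow_one] at hpow
      rw [ham1] at hpow
      norm_num at hpow
    by_cases hSall : ∀ i j : Fin (ν+1), f i * f j = 1
    · set t := f 0 with htdef
      have ht2 : t * t = 1 := hSall 0 0
      have hfi : ∀ i, f i = t := by
        intro i
        have h2 : f i = t⁻¹ := eq_inv_of_mul_eq_one_left (hSall i 0)
        rw [h2, inv_eq_of_mul_eq_one_right ht2]
      have hGle : G ≤ Subgroup.zpowers t := by
        rw [hG]
        refine (Subgroup.closure_le _).mpr ?_
        rintro x ⟨i, rfl⟩
        rw [hfi i]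
        exact Subgroup.mem_zpowers t
      have htsq : t ^ 2 = 1 := by rw [pow_two]; exact ht2
      have hfo : IsOfFinOrder t := isOfFinOrder_iff_pow_eq_one.mpr ⟨2, by norm_num, htsq⟩
      have hord : orderOf t ≤ 2 := Nat.le_of_dvd (by norm_num) (orderOf_dvd_of_pow_eq_one htsq)
      have hzfin : (Subgroup.zpowers t : Set (Diff ℝ)).Finite := finite_zpowers.mpr hfo
      have : Finite (Subgroup.zpowers t) := hzfin.to_subtype
      refine ⟨hzfin.subset (SetLike.coe_subset_coe.mpr hGle), ?_, fun h0 => absurd h0 hs0F⟩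
      calc Nat.card G ≤ Nat.card (Subgroup.zpowers t) := Subgroup.card_le_of_le hGle
      _ = orderOf t := Nat.card_zpowers t
      _ ≤ 2 := hord
    · push_neg at hSall
      obtain ⟨iw0, jw0, hw0⟩ := hSall
      have hmupair : ∀ i j, multiplier ((f i * f j).val) = 1 := by
        intro i j
        rw [Units.val_mul, Aux.multiplier_mul, hmum1, hmum1]
        norm_num
      have hex : ∃ m, ∃ i j c, c ≠ 0 ∧ Aux.PP m c ((f i * f j).val) := by
        obtain ⟨m, c, _, hc, hpp⟩ := Aux.exists_pp (hmupair iw0 jw0) (Aux.val_ne_one hw0)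
        exact ⟨m, iw0, jw0, c, hc, hpp⟩
      set ℓ := Nat.find hex with hldef
      obtain ⟨iw, jw, cw, hcw, hppw⟩ := Nat.find_spec hex
      rw [← hldef] at hppw
      have hmin' : ∀ m' < ℓ, ¬ ∃ i j c, c ≠ 0 ∧ Aux.PP m' c ((f i * f j).val) :=
        fun m' hm' => Nat.find_min hex hm'
      have hℓ1 : 1 ≤ ℓ := by
        by_contra h0
        have hl0 : ℓ = 0 := by omega
        rw [hl0] at hppw
        exact hcw (hppw.unique (Aux.pp_zero_tangent (hmupair iw jw)))
      have hD : ∀ i j, Aux.DD ℓ ((f i * f j).val) := by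
        intro i j
        by_cases h1 : f i * f j = 1
        · rw [h1, Units.val_one]; exact ⟨0, Aux.pp_one ℓ⟩
        · obtain ⟨m, c, hm1, hc, hpp⟩ := Aux.exists_pp (hmupair i j) (Aux.val_ne_one h1)
          rcases lt_trichotomy m ℓ with hlt | heq | hgt
          · exact absurd ⟨i, j, c, hc, hpp⟩ (hmin' m hlt)
          · exact ⟨c, heq ▸ hpp⟩
          · exact ⟨0, hpp.mono hgt⟩
      set SS : Set ℝ :=
        Set.range (fun q : Fin (ν+1) × Fin (ν+1) => Aux.tauF ℓ ((f q.1 * f q.2).val)) with hSS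
      have hmemΛ : ∀ i j, Aux.tauF ℓ ((f i * f j).val) ∈ Submodule.span ℤ SS := fun i j =>
        Submodule.subset_span ⟨(i,j), rfl⟩
      set w1 := f 0 with hw1
      set AG : Diff ℝ → Prop :=
        fun g => multiplier g.val = 1 ∧ Aux.DD ℓ g.val ∧
          Aux.tauF ℓ g.val ∈ Submodule.span ℤ SS with hAG
      have hAmul : ∀ {x y}, AG x → AG y → AG (x * y) := by
        rintro x y ⟨hx1, hx2, hx3⟩ ⟨hy1, hy2, hy3⟩
        have h2 := Aux.dd_mul hℓ1 hx2 hy2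
        refine ⟨?_, h2.1, ?_⟩
        · rw [Units.val_mul, Aux.multiplier_mul, hx1, hy1, one_mul]
        · rw [h2.2]; exact Submodule.add_mem _ hx3 hy3
      have hAinv : ∀ {x}, AG x → AG x⁻¹ := by
        rintro x ⟨hx1, hx2, hx3⟩
        have h2 := Aux.dd_inv hℓ1 hx1 hx2
        refine ⟨?_, h2.1, ?_⟩
        · have h3 := Aux.multiplier_unit_mul_inv x
          rw [hx1, one_mul] at h3
          exact h3
        · rw [h2.2]; exact Submodule.neg_mem _ hx3
      have hAconj : ∀ (u : Diff ℝ) {x}, (multiplier u.val = 1 ∨ multiplier u.val = -1) →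
          AG x → AG (u⁻¹ * x * u) := by
        rintro u x hu ⟨hx1, hx2, hx3⟩
        have h2 := Aux.dd_conj hℓ1 u hx1 hx2
        have hμ : multiplier ((u⁻¹ * x * u).val) = 1 := by
          rw [Units.val_mul, Units.val_mul, Aux.multiplier_mul, Aux.multiplier_mul, hx1, mul_one,
            mul_comm]
          exact Aux.multiplier_unit_mul_inv u
        refine ⟨hμ, h2.1, ?_⟩
        rw [h2.2]
        rcases hu with hu | hu
        · rw [hu, one_pow, one_mul]; exact hx3
        · rw [hu]
          rcases Nat.even_or_odd ℓ with he | ho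
          · rw [he.neg_one_pow, one_mul]; exact hx3
          · rw [ho.neg_one_pow, neg_one_mul]; exact Submodule.neg_mem _ hx3
      have hmuw1 : multiplier w1.val = -1 := hmum1 0
      have hmuw1inv : multiplier (w1⁻¹).val = -1 := by
        have h2 := Aux.multiplier_unit_mul_inv w1
        rw [hmuw1] at h2; linarith
      have hmuinv : ∀ i, multiplier ((f i)⁻¹).val = -1 := by
        intro i
        have h2 := Aux.multiplier_unit_mul_inv (f i)
        rw [hmum1 i] at h2
        linarith
      have hAG11 : AG (w1 * w1) := ⟨hmupair 0 0, hD 0 0, hmemΛ 0 0⟩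
      set T : Subgroup (Diff ℝ) :=
        { carrier := {g | AG g ∨ (multiplier g.val = -1 ∧ AG (w1 * g))}
          one_mem' := Or.inl ⟨by rw [Units.val_one]; exact Aux.multiplier_one,
            (Aux.dd_one ℓ).1,
            by rw [(Aux.dd_one ℓ).2]; exact Submodule.zero_mem _⟩
          mul_mem' := by
            rintro x y (hx | ⟨hx1, hx2⟩) (hy | ⟨hy1, hy2⟩)
            · exact Or.inl (hAmul hx hy)
            · refine Or.inr ⟨?_, ?_⟩
              · rw [Units.val_mul, Aux.multiplier_mul, hx.1, hy1, one_mul]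
              · have hgx : AG ((w1⁻¹)⁻¹ * x * w1⁻¹) := hAconj w1⁻¹ (Or.inr hmuw1inv) hx
                have h3 := hAmul hgx hy2
                have hid : ((w1⁻¹)⁻¹ * x * w1⁻¹) * (w1 * y) = w1 * (x * y) := by group
                rwa [hid] at h3
            · refine Or.inr ⟨?_, ?_⟩
              · rw [Units.val_mul, Aux.multiplier_mul, hx1, hy.1, mul_one]
              · have h3 := hAmul hx2 hy
                have hid : (w1 * x) * y = w1 * (x * y) := by group
                rwa [hid] at h3
            · refine Or.inl ?_
              have hu : AG (w1⁻¹ * (w1 * x) * w1) := hAconj w1 (Or.inr hmuw1) hx2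
              have h3 := hAmul (hAmul hu (hAinv hAG11)) hy2
              have hid : ((w1⁻¹ * (w1 * x) * w1) * (w1 * w1)⁻¹) * (w1 * y) = x * y := by group
              rwa [hid] at h3
          inv_mem' := by
            rintro x (hx | ⟨hx1, hx2⟩)
            · exact Or.inl (hAinv hx)
            · refine Or.inr ⟨?_, ?_⟩
              · have h2 := Aux.multiplier_unit_mul_inv x
                rw [hx1] at h2; linarith
              · have hu : AG ((w1⁻¹)⁻¹ * (w1 * x)⁻¹ * w1⁻¹) :=
                  hAconj w1⁻¹ (Or.inr hmuw1inv) (hAinv hx2)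
                have h3 := hAmul hu hAG11
                have hid : (((w1⁻¹)⁻¹ * (w1 * x)⁻¹ * w1⁻¹)) * (w1 * w1) = w1 * x⁻¹ := by group
                rwa [hid] at h3 } with hT
      have hGT : G ≤ T := by
        rw [hG]
        refine (Subgroup.closure_le T).mpr ?_
        rintro x ⟨i, rfl⟩
        exact Or.inr ⟨hmum1 i, ⟨hmupair 0 i, hD 0 i, hmemΛ 0 i⟩⟩
      have hfjconj : ∀ i j, ∃ g : Diff ℝ, g ∈ G ∧ g⁻¹ * f i * g = f j := by
        intro i j
        obtain ⟨g, hgG, hcij⟩ := hconj i j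
        refine ⟨g, hgG, ?_⟩
        calc g⁻¹ * f i * g = g⁻¹ * (f i * g) := by group
        _ = g⁻¹ * (g * f j) := by rw [hcij]
        _ = f j := by group
      have hkey3 : ∀ i j, ∃ r ∈ Submodule.span ℤ SS, Aux.tauF ℓ ((f i * f j).val)
          = (-1:ℝ)^ℓ * (-r) + Aux.tauF ℓ ((f i * f i).val) + r := by
        intro i j
        obtain ⟨g, hgG, hfj⟩ := hfjconj i j
        rcases hGT hgG with hgA | ⟨hgm1, hgB⟩
        · refine ⟨Aux.tauF ℓ g.val, hgA.2.2, ?_⟩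
          have hinv := Aux.dd_inv hℓ1 hgA.1 hgA.2.1
          have hmuginv : multiplier (g⁻¹).val = 1 := by
            have h2 := Aux.multiplier_unit_mul_inv g
            rw [hgA.1, one_mul] at h2; exact h2
          have hconjp := Aux.dd_conj hℓ1 ((f i)⁻¹) hmuginv hinv.1
          have hmul1 := Aux.dd_mul hℓ1 hconjp.1 (hD i i)
          have hmul2 := Aux.dd_mul hℓ1 hmul1.1 hgA.2.1
          have hid : ((((f i)⁻¹)⁻¹ * g⁻¹ * (f i)⁻¹) * (f i * f i)) * g = f i * f j := by
            rw [← hfj]; group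
          rw [← hid, hmul2.2, hmul1.2, hconjp.2, hinv.2, hmuinv i]
        · have hk1 : AG ((w1 * f i)⁻¹ * (w1 * g)) :=
            hAmul (hAinv ⟨hmupair 0 i, hD 0 i, hmemΛ 0 i⟩) hgB
          have hkid : (w1 * f i)⁻¹ * (w1 * g) = (f i)⁻¹ * g := by group
          rw [hkid] at hk1
          refine ⟨Aux.tauF ℓ ((f i)⁻¹ * g).val, hk1.2.2, ?_⟩
          have hinv := Aux.dd_inv hℓ1 hk1.1 hk1.2.1
          have hmukinv : multiplier (((f i)⁻¹ * g)⁻¹).val = 1 := by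
            have h2 := Aux.multiplier_unit_mul_inv ((f i)⁻¹ * g)
            rw [hk1.1, one_mul] at h2; exact h2
          have hconjp := Aux.dd_conj hℓ1 ((f i)⁻¹) hmukinv hinv.1
          have hmul1 := Aux.dd_mul hℓ1 hconjp.1 (hD i i)
          have hmul2 := Aux.dd_mul hℓ1 hmul1.1 hk1.2.1
          have hid : ((((f i)⁻¹)⁻¹ * ((f i)⁻¹ * g)⁻¹ * (f i)⁻¹) * (f i * f i)) * ((f i)⁻¹ * g)
              = f i * f j := by rw [← hfj]; group
          rw [← hid, hmul2.2, hmul1.2, hconjp.2, hinv.2, hmuinv i]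
      have hkeyS : ∀ i j, ∃ e : ℝ, (e = 1 ∨ e = -1) ∧
          Aux.tauF ℓ ((f j * f j).val) = e^ℓ * Aux.tauF ℓ ((f i * f i).val) := by
        intro i j
        obtain ⟨g, hgG, hfj⟩ := hfjconj i j
        have hμg : multiplier g.val = 1 ∨ multiplier g.val = -1 := by
          rcases hGT hgG with hgA | ⟨hgm1, _⟩
          · exact Or.inl hgA.1
          · exact Or.inr hgm1
        refine ⟨multiplier g.val, hμg, ?_⟩
        have hconjp := Aux.dd_conj hℓ1 g (hmupair i i) (hD i i)
        have hid : g⁻¹ * (f i * f i) * g = f j * f j := by rw [← hfj]; group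
        rw [← hid]
        exact hconjp.2
      have hkeyInv : Odd ℓ → ∀ i, Aux.tauF ℓ ((f i * f i).val) = 0 := by
        intro ho i
        have hconjp := Aux.dd_conj hℓ1 (f i) (hmupair i i) (hD i i)
        have hid : (f i)⁻¹ * (f i * f i) * (f i) = f i * f i := by group
        rw [hid, hmum1 i, ho.neg_one_pow] at hconjp
        have h2 := hconjp.2
        linarith
      rcases Nat.even_or_odd ℓ with he | ho
      · -- ℓ even
        have hseq : ∀ i, Aux.tauF ℓ ((f i * f i).val) = Aux.tauF ℓ ((f 0 * f 0).val) := by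
          intro i
          obtain ⟨e, he1, h2⟩ := hkeyS i 0
          rw [h2]
          rcases he1 with h | h
          · rw [h, one_pow, one_mul]
          · rw [h, he.neg_one_pow, one_mul]
        have hpairval : ∀ i j, Aux.tauF ℓ ((f i * f j).val)
            = Aux.tauF ℓ ((f 0 * f 0).val) := by
          intro i j
          obtain ⟨r, hr, h2⟩ := hkey3 i j
          rw [h2, he.neg_one_pow, hseq i]
          ring
        have hmuprodlist : ∀ L : List (Diff ℝ), (∀ x ∈ L, multiplier x.val = -1) →
            multiplier (L.prod).val = (-1:ℝ)^L.length := by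
          intro L
          induction L with
          | nil =>
            intro _
            rw [List.prod_nil, List.length_nil, pow_zero, Units.val_one]
            exact Aux.multiplier_one
          | cons x L ih =>
            intro hmem
            rw [List.prod_cons, Units.val_mul, Aux.multiplier_mul, hmem x (by simp),
              ih (fun y hy => hmem y (by simp [hy])), List.length_cons, pow_succ]
            ring
        have hneven : Even (ν + 1) := by
          have h2 := hmuprodlist (List.ofFn f) (fun x hx => by
            obtain ⟨i, hi⟩ := List.mem_ofFn.mp hx
            rw [← hi]; exact hmum1 i)
          rw [hcomp, List.length_ofFn, Units.val_one, Aux.multiplier_one] at h2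
          exact (neg_one_pow_eq_one_iff_even (by norm_num : (-1:ℝ) ≠ 1)).mp h2.symm
        have hpairs : ∀ N : ℕ, ∀ L : List (Diff ℝ), L.length = 2 * N →
            (∀ x ∈ L, ∃ i, x = f i) →
            Aux.DD ℓ (L.prod).val ∧
              Aux.tauF ℓ (L.prod).val = N • Aux.tauF ℓ ((f 0 * f 0).val) := by
          intro N
          induction N with
          | zero =>
            intro L hlen _
            have hnil : L = [] := List.length_eq_zero_iff.mp (by omega)
            rw [hnil, List.prod_nil, zero_smul]
            exact Aux.dd_one ℓ
          | succ N ih =>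
            intro L hlen hmem
            rcases L with _ | ⟨x, L₂⟩
            · simp at hlen
            rcases L₂ with _ | ⟨y, L'⟩
            · simp at hlen; omega
            obtain ⟨i, hxi⟩ := hmem x (by simp)
            obtain ⟨j, hyj⟩ := hmem y (by simp)
            have hlen' : L'.length = 2 * N := by
              simp only [List.length_cons] at hlen; omega
            have hih := ih L' hlen' (fun z hz => hmem z (by simp [hz]))
            rw [List.prod_cons, List.prod_cons, ← mul_assoc]
            have hDxy : Aux.DD ℓ ((x * y).val) := by rw [hxi, hyj]; exact hD i j
            have h2 := Aux.dd_mul hℓ1 hDxy hih.1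
            refine ⟨h2.1, ?_⟩
            rw [h2.2, hih.2]
            have h3 : Aux.tauF ℓ ((x*y).val) = Aux.tauF ℓ ((f 0 * f 0).val) := by
              rw [hxi, hyj]; exact hpairval i j
            rw [h3, succ_nsmul]
            ring
        obtain ⟨K, hK⟩ := hneven
        have hfin2 := hpairs K (List.ofFn f) (by rw [List.length_ofFn]; omega) (fun x hx => by
          obtain ⟨i, hi⟩ := List.mem_ofFn.mp hx
          exact ⟨i, hi.symm⟩)
        rw [hcomp] at hfin2
        have hK1 : K ≠ 0 := by omega
        have hs00 : Aux.tauF ℓ ((f 0 * f 0).val) = 0 := by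
          have h3 : (K : ℝ) * Aux.tauF ℓ ((f 0 * f 0).val) = 0 := by
            rw [← nsmul_eq_mul, ← hfin2.2]
            exact (Aux.dd_one ℓ).2
          exact (mul_eq_zero.mp h3).resolve_left (Nat.cast_ne_zero.mpr hK1)
        have hcwval : Aux.tauF ℓ ((f iw * f jw).val) = cw := Aux.tauF_eq hppw
        rw [hpairval iw jw, hs00] at hcwval
        exact absurd hcwval.symm hcw
      · -- ℓ odd
        have hdvd : ∀ x ∈ SS, ∃ y ∈ Submodule.span ℤ SS, x = 2 * y := by
          rintro x ⟨⟨i, j⟩, rfl⟩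
          obtain ⟨r, hr, h2⟩ := hkey3 i j
          refine ⟨r, hr, ?_⟩
          show Aux.tauF ℓ ((f i * f j).val) = 2 * r
          rw [h2, hkeyInv ho i, ho.neg_one_pow]
          ring
        have hzero := Aux.span_trivial SS (Set.finite_range _) hdvd
        have hcwval : Aux.tauF ℓ ((f iw * f jw).val) = cw := Aux.tauF_eq hppw
        have hmem2 : Aux.tauF ℓ ((f iw * f jw).val) ∈ Submodule.span ℤ SS :=
          Submodule.subset_span ⟨(iw, jw), rfl⟩
        rw [hzero _ hmem2] at hcwval
        exact absurd hcwval.symm hcw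
end

section
/- Let p ∈ ℕ*, f(z) = z/(1−z^p)^{1/p}, f^{-1}(z) = z/(1+z^p)^{1/p}, and h(z) = e^{πi/p}z. Then f∘h = h∘f^{-1}, so f and f^{-1} are conjugate in Diff(ℂ,0), even though f has infinite order. -/
open Filter Topology

/-- `(x ^ (1/p)) ^ p = x` for nonzero `x`. -/
lemma aux_cpow_inv_pow (p : ℕ) (hp : 0 < p) (x : ℂ) (hx : x ≠ 0) :
    (x ^ ((p : ℂ)⁻¹)) ^ p = x := by
  have hpC : (p : ℂ) ≠ 0 := Nat.cast_ne_zero.mpr hp.ne'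
  rw [Complex.cpow_def_of_ne_zero hx, ← Complex.exp_nat_mul]
  rw [show (p : ℂ) * (Complex.log x * (p : ℂ)⁻¹) = Complex.log x by
    field_simp]
  exact Complex.exp_log hx

lemma aux_arg_ne_pi {x : ℂ} (hx : 0 < x.re) : x.arg ≠ Real.pi := by
  intro h
  rw [Complex.arg_eq_pi_iff] at h
  linarith [h.1]

/-- real iterate formula -/
lemma aux_iter (p : ℕ) (hp : 0 < p) (f : ℂ → ℂ)
    (hf : ∀ z, f z = z / (1 - z ^ p) ^ ((p : ℂ)⁻¹))
    (x : ℝ) (hx : 0 < x) :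
    ∀ n : ℕ, (n : ℝ) * x ^ p < 1 →
      f^[n] (x : ℂ) = ((x / (1 - n * x ^ p) ^ ((p : ℝ)⁻¹) : ℝ) : ℂ) := by
  have hpR : (p : ℝ) ≠ 0 := Nat.cast_ne_zero.mpr hp.ne'
  have hxp : 0 < x ^ p := pow_pos hx p
  intro n
  induction n with
  | zero => intro _; simp
  | succ n ih =>
      intro hn1
      have hn' : (n : ℝ) * x ^ p < 1 := by
        push_cast at hn1 ⊢; nlinarith
      have hd : 0 < 1 - (n : ℝ) * x ^ p := by linarith
      have hd1 : 0 < 1 - ((n : ℝ) + 1) * x ^ p := by push_cast at hn1; linarith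
      set y : ℝ := x / (1 - n * x ^ p) ^ ((p : ℝ)⁻¹) with hy
      have hdp : 0 < (1 - (n : ℝ) * x ^ p) ^ ((p : ℝ)⁻¹) := Real.rpow_pos_of_pos hd _
      have hy0 : 0 < y := div_pos hx hdp
      -- y ^ p = x^p / (1 - n x^p)
      have hyp : y ^ p = x ^ p / (1 - (n : ℝ) * x ^ p) := by
        rw [hy, div_pow]
        congr 1
        rw [← Real.rpow_natCast ((1 - (n:ℝ) * x ^ p) ^ ((p : ℝ)⁻¹)) p,
          ← Real.rpow_mul hd.le, inv_mul_cancel₀ hpR, Real.rpow_one]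
      have h1yp : 1 - y ^ p = (1 - ((n : ℝ) + 1) * x ^ p) / (1 - (n : ℝ) * x ^ p) := by
        rw [hyp]; rw [eq_div_iff hd.ne', sub_mul, div_mul_cancel₀ _ hd.ne']; ring
      have h1yp_pos : 0 < 1 - y ^ p := by rw [h1yp]; positivity
      rw [Function.iterate_succ_apply', ih hn', hf]
      have hcast : ((y : ℂ)) ^ p = ((y ^ p : ℝ) : ℂ) := by push_cast; ring
      rw [hcast, show (1 : ℂ) - ((y ^ p : ℝ) : ℂ) = (((1 - y ^ p : ℝ)) : ℂ) by push_cast; ring]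
      rw [show ((p : ℂ))⁻¹ = (((p : ℝ)⁻¹ : ℝ) : ℂ) by push_cast; ring]
      rw [← Complex.ofReal_cpow h1yp_pos.le, ← Complex.ofReal_div]
      congr 1
      -- real computation
      rw [h1yp, Real.div_rpow hd1.le hd.le, hy]
      have hA : 0 < (1 - ((n:ℝ) + 1) * x ^ p) ^ ((p : ℝ)⁻¹) := Real.rpow_pos_of_pos hd1 _
      push_cast
      field_simp

/-- With `f(z) = z/(1-z^p)^{1/p}`, `f⁻¹(z) = z/(1+z^p)^{1/p}`
(principal branches) and `h(z) = e^{πi/p} z`, one has `f∘h = h∘f⁻¹` as germs at `0`: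
`f` and `f⁻¹` are conjugate in `Diff(ℂ,0)`, even though `f` has infinite order. -/
theorem stmt14 (p : ℕ) (hp : 0 < p) (f finv h : ℂ → ℂ)
    (hf : ∀ z, f z = z / (1 - z ^ p) ^ ((p : ℂ)⁻¹))
    (hfinv : ∀ z, finv z = z / (1 + z ^ p) ^ ((p : ℂ)⁻¹))
    (hh : ∀ z, h z = Complex.exp (Real.pi * Complex.I / p) * z) :
    ((fun z => f (finv z)) =ᶠ[nhds (0 : ℂ)] id) ∧
    ((fun z => finv (f z)) =ᶠ[nhds (0 : ℂ)] id) ∧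
    ((fun z => f (h z)) =ᶠ[nhds (0 : ℂ)] fun z => h (finv z)) ∧
    ∀ n : ℕ, 1 ≤ n → ¬ (f^[n] =ᶠ[nhds (0 : ℂ)] id) := by
  have hpC : (p : ℂ) ≠ 0 := Nat.cast_ne_zero.mpr hp.ne'
  have hball : Metric.ball (0 : ℂ) 1 ∈ nhds (0 : ℂ) := Metric.ball_mem_nhds 0 one_pos
  -- basic facts on the ball
  have key : ∀ z : ℂ, ‖z‖ < 1 → ‖z ^ p‖ < 1 := by
    intro z hz
    rw [norm_pow]
    exact pow_lt_one₀ (norm_nonneg z) hz hp.ne'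
  have hre : ∀ w : ℂ, ‖w‖ < 1 → 0 < (1 + w).re ∧ 0 < (1 - w).re := by
    intro w hw
    have h1 := Complex.abs_re_le_norm w
    have h2 : |w.re| ≤ ‖w‖ := h1
    constructor <;> [skip; skip] <;>
      · simp only [Complex.add_re, Complex.sub_re, Complex.one_re]
        cases abs_le.mp h2 with
        | intro hl hr => linarith
  refine ⟨?_, ?_, ?_, ?_⟩
  · -- f ∘ finv = id
    filter_upwards [hball] with z hz
    simp only [Metric.mem_ball, dist_zero_right] at hz
    have hw := key z hz
    set w := z ^ p with hwdef
    obtain ⟨hre1, _⟩ := hre w hw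
    simp only [Complex.add_re, Complex.one_re] at hre1
    have h1w : (1 : ℂ) + w ≠ 0 := by
      intro hc; rw [Complex.ext_iff] at hc; simp at hc; linarith [hc.1]
    set B := ((1 : ℂ) + w) ^ ((p : ℂ)⁻¹) with hB
    have hB0 : B ≠ 0 := by
      rw [hB]; intro hc
      rw [Complex.cpow_eq_zero_iff] at hc; exact h1w hc.1
    have hBp : B ^ p = 1 + w := aux_cpow_inv_pow p hp _ h1w
    rw [hf, hfinv]
    have hzp : (z / B) ^ p = w / (1 + w) := by rw [div_pow, hBp, hwdef]
    rw [hzp]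
    have : (1 : ℂ) - w / (1 + w) = (1 + w)⁻¹ := by field_simp; ring
    rw [this, Complex.inv_cpow _ _ (aux_arg_ne_pi hre1), ← hB]
    simp only [id_eq]
    field_simp
  · -- finv ∘ f = id
    filter_upwards [hball] with z hz
    simp only [Metric.mem_ball, dist_zero_right] at hz
    have hw := key z hz
    set w := z ^ p with hwdef
    obtain ⟨_, hre2⟩ := hre w hw
    simp only [Complex.sub_re, Complex.one_re] at hre2
    have h1w : (1 : ℂ) - w ≠ 0 := by
      intro hc; rw [Complex.ext_iff] at hc; simp at hc; linarith [hc.1, hre2]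
    set A := ((1 : ℂ) - w) ^ ((p : ℂ)⁻¹) with hA
    have hA0 : A ≠ 0 := by
      rw [hA]; intro hc
      rw [Complex.cpow_eq_zero_iff] at hc; exact h1w hc.1
    have hAp : A ^ p = 1 - w := aux_cpow_inv_pow p hp _ h1w
    rw [hfinv, hf]
    have hzp : (z / A) ^ p = w / (1 - w) := by rw [div_pow, hAp, hwdef]
    rw [hzp]
    have : (1 : ℂ) + w / (1 - w) = (1 - w)⁻¹ := by field_simp; ring
    rw [this, Complex.inv_cpow _ _ (aux_arg_ne_pi hre2), ← hA]
    simp only [id_eq]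
    field_simp
  · -- f ∘ h = h ∘ finv
    have hexp : Complex.exp (Real.pi * Complex.I / p) ^ p = -1 := by
      rw [← Complex.exp_nat_mul]
      rw [show (p : ℂ) * (Real.pi * Complex.I / p) = Real.pi * Complex.I by
        field_simp]
      exact Complex.exp_pi_mul_I
    apply Eventually.of_forall
    intro z
    show f (h z) = h (finv z)
    rw [hf, hh, hh, hfinv]
    have : (Complex.exp (Real.pi * Complex.I / p) * z) ^ p = -(z ^ p) := by
      rw [mul_pow, hexp]; ring
    rw [this, show (1 : ℂ) - -(z ^ p) = 1 + z ^ p by ring]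
    rw [mul_div_assoc]
  · -- infinite order
    intro n hn hcontra
    rw [Filter.eventuallyEq_iff_exists_mem] at hcontra
    obtain ⟨s, hs, hseq⟩ := hcontra
    rw [Metric.mem_nhds_iff] at hs
    obtain ⟨ε, hε, hball'⟩ := hs
    set x : ℝ := min (ε / 2) (min 1 (1 / (2 * n))) with hx
    have hn0 : (0 : ℝ) < n := by exact_mod_cast hn
    have hx0 : 0 < x := by
      apply lt_min (by linarith)
      apply lt_min one_pos
      positivity
    have hx1 : x ≤ 1 := le_trans (min_le_right _ _) (min_le_left _ _)
    have hxn : x ≤ 1 / (2 * n) := le_trans (min_le_right _ _) (min_le_right _ _)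
    have hxp : x ^ p ≤ x := pow_le_of_le_one hx0.le hx1 hp.ne'
    have hnx : (n : ℝ) * x ^ p < 1 := by
      have : (n : ℝ) * x ^ p ≤ (n : ℝ) * (1 / (2 * n)) :=
        mul_le_mul_of_nonneg_left (le_trans hxp hxn) (by positivity)
      have h2 : (n : ℝ) * (1 / (2 * n)) = 1 / 2 := by field_simp
      linarith [this, h2 ▸ this]
    have hmem : (x : ℂ) ∈ s := by
      apply hball'
      simp only [Metric.mem_ball, dist_zero_right, Complex.norm_real]
      rw [Real.norm_eq_abs, abs_of_pos hx0]
      linarith [min_le_left (ε / 2) (min 1 (1 / (2 * (n : ℝ))))]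
    have heq := hseq hmem
    rw [aux_iter p hp f hf x hx0 n hnx] at heq
    simp only [id_eq] at heq
    have heqR : x / (1 - n * x ^ p) ^ ((p : ℝ)⁻¹) = x := by exact_mod_cast heq
    have hd : 0 < 1 - (n : ℝ) * x ^ p := by linarith
    have hdlt : 1 - (n : ℝ) * x ^ p < 1 := by
      have : 0 < (n : ℝ) * x ^ p := by positivity
      linarith
    have hrp : (1 - (n : ℝ) * x ^ p) ^ ((p : ℝ)⁻¹) < 1 := by
      exact Real.rpow_lt_one hd.le hdlt (inv_pos.mpr (by exact_mod_cast hp))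
    have hrp0 : 0 < (1 - (n : ℝ) * x ^ p) ^ ((p : ℝ)⁻¹) := Real.rpow_pos_of_pos hd _
    have : x < x / (1 - n * x ^ p) ^ ((p : ℝ)⁻¹) := by
      rw [lt_div_iff₀ hrp0]
      nlinarith
    linarith [heqR ▸ this]
end
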